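/- arXiv:2505.19411 — 6 statements merged into one kernel-verified Lean document; each statement's English description precedes it below -/
import Mathlib

section
/- Let P_A denote the orthogonal (Euclidean) projection onto the nonempty closed affine set A, let λ_max(Φ) be the largest eigenvalue of Φ, and fix a step size α with 0 < α < 1/λ_max(Φ). For any initial guess w_1 ∈ ℝ^N, define the projected-gradient iteration w_{k+1} = P_A( w_k − 2α Π_fᵀ (I_{T_f} ⊗ Φ)(Π_f w_k − w_ref) ) for k ≥ 1. Then the sequence {w_k} converges to the unique point w* ∈ A satisfying h(w*) ≤ h(w) for all w ∈ A (the unique global optimum of the finite-horizon LQT problem). -/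
/-!
STATEMENT 2: Convergence of the projected-gradient (forward-backward) algorithm\nfor the finite-horizon LQT problem.
-/

open scoped RealInnerProductSpace
open Filter Topology

noncomputable section LQT2

/-- The ambient space ℝ^N with N = q(T_ini + T_f), coordinates indexed by
time (first `Tini` instants, then `Tf` instants) and component in `Fin q`. -/
abbrev Efull (q Tini Tf : ℕ) : Type := EuclideanSpace ℝ ((Fin Tini ⊕ Fin Tf) × Fin q)

/-- ℝ^{q T_ini}. -/
abbrev EiniSp (q Tini : ℕ) : Type := EuclideanSpace ℝ (Fin Tini × Fin q)

/-- ℝ^{q T_f}. -/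
abbrev EfSp (q Tf : ℕ) : Type := EuclideanSpace ℝ (Fin Tf × Fin q)

/-- Π_ini : extraction of the first q T_ini coordinates. -/
def piIni {q Tini Tf : ℕ} (w : Efull q Tini Tf) : EiniSp q Tini :=
  WithLp.toLp 2 (fun p : Fin Tini × Fin q => w (Sum.inl p.1, p.2))

/-- Π_f : extraction of the last q T_f coordinates. -/
def piF {q Tini Tf : ℕ} (w : Efull q Tini Tf) : EfSp q Tf :=
  WithLp.toLp 2 (fun p : Fin Tf × Fin q => w (Sum.inr p.1, p.2))

/-- Π_fᵀ : embedding of ℝ^{q T_f} into ℝ^N (zero on the first block). -/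
def piFT {q Tini Tf : ℕ} (v : EfSp q Tf) : Efull q Tini Tf :=
  WithLp.toLp 2 (fun p : (Fin Tini ⊕ Fin Tf) × Fin q => Sum.elim (fun _ => (0 : ℝ)) (fun t => v (t, p.2)) p.1)

/-- The stacked vector (a, b). -/
def stack {q Tini Tf : ℕ} (a : EiniSp q Tini) (b : EfSp q Tf) : Efull q Tini Tf :=
  WithLp.toLp 2 (fun p : (Fin Tini ⊕ Fin Tf) × Fin q => Sum.elim (fun t => a (t, p.2)) (fun t => b (t, p.2)) p.1)

/-- The action of the Kronecker product I_{T_f} ⊗ Φ on ℝ^{q T_f}. -/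
def kronMul {q Tf : ℕ} (Φ : Matrix (Fin q) (Fin q) ℝ) (v : EfSp q Tf) : EfSp q Tf :=
  WithLp.toLp 2 (fun p : Fin Tf × Fin q => ∑ j, Φ p.2 j * v (p.1, j))

/-- ‖v‖²_{I ⊗ Φ} = vᵀ (I_{T_f} ⊗ Φ) v. -/
def wnormSq {q Tf : ℕ} (Φ : Matrix (Fin q) (Fin q) ℝ) (v : EfSp q Tf) : ℝ :=
  ∑ t : Fin Tf, ∑ i, ∑ j, v (t, i) * Φ i j * v (t, j)

/-- The affine constraint set A = {w ∈ V : Π_ini w = w_ini}. -/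
def Aset {q Tini Tf : ℕ} (V : Submodule ℝ (Efull q Tini Tf)) (wini : EiniSp q Tini) :
    Set (Efull q Tini Tf) :=
  {w | w ∈ V ∧ piIni w = wini}

-- ============ linear map version of piIni ============
def piIniL (q Tini Tf : ℕ) : Efull q Tini Tf →ₗ[ℝ] EiniSp q Tini where
  toFun := piIni
  map_add' := fun _ _ => rfl
  map_smul' := fun _ _ => rfl

-- ============ inner products ============
lemma inner_split {q Tini Tf : ℕ} (x y : Efull q Tini Tf) :
    ⟪x, y⟫ = ⟪piIni x, piIni y⟫ + ⟪piF x, piF y⟫ := by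
  simp only [PiLp.inner_apply, RCLike.inner_apply, conj_trivial]
  rw [Fintype.sum_prod_type (f := fun p : (Fin Tini ⊕ Fin Tf) × Fin q => y p * x p),
    Fintype.sum_sum_type, Fintype.sum_prod_type, Fintype.sum_prod_type]
  rfl

lemma normsq_split {q Tini Tf : ℕ} (x : Efull q Tini Tf) :
    ‖x‖^2 = ‖piIni x‖^2 + ‖piF x‖^2 := by
  rw [← real_inner_self_eq_norm_sq, ← real_inner_self_eq_norm_sq,
    ← real_inner_self_eq_norm_sq, inner_split]

lemma inner_piFT {q Tini Tf : ℕ} (u : EfSp q Tf) (d : Efull q Tini Tf) :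
    ⟪(piFT u : Efull q Tini Tf), d⟫ = ⟪u, piF d⟫ := by
  rw [inner_split]
  have h1 : piIni (piFT u : Efull q Tini Tf) = 0 := by
    ext p; rcases p with ⟨t, i⟩; rfl
  have h2 : piF (piFT u : Efull q Tini Tf) = u := rfl
  rw [h1, h2, inner_zero_left]; ring

-- ============ matrix-level spectral lemmas ============
section MatrixLemmas
variable {q : ℕ}

def matE (Φ : Matrix (Fin q) (Fin q) ℝ) (v : EuclideanSpace ℝ (Fin q)) : EuclideanSpace ℝ (Fin q) :=
  WithLp.toLp 2 (fun i => ∑ j, Φ i j * v j)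

lemma matE_eq_mulVec (Φ : Matrix (Fin q) (Fin q) ℝ) (v : EuclideanSpace ℝ (Fin q)) :
    matE Φ v = Φ.mulVec v := rfl

lemma inner_eq_sum (x y : EuclideanSpace ℝ (Fin q)) : ⟪x, y⟫ = ∑ i, x i * y i := by
  simp [PiLp.inner_apply]; exact Finset.sum_congr rfl fun i _ => mul_comm _ _

lemma normsq_eq_sum (x : EuclideanSpace ℝ (Fin q)) : ‖x‖^2 = ∑ i, (x i)^2 := by
  rw [← real_inner_self_eq_norm_sq, inner_eq_sum]; simp [sq]

lemma matE_symm {Φ : Matrix (Fin q) (Fin q) ℝ} (hΦ : Φ.IsHermitian)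
    (x y : EuclideanSpace ℝ (Fin q)) : ⟪x, matE Φ y⟫ = ⟪matE Φ x, y⟫ := by
  simp only [inner_eq_sum, matE, Finset.mul_sum, Finset.sum_mul]
  rw [Finset.sum_comm]
  apply Finset.sum_congr rfl; intro i _
  apply Finset.sum_congr rfl; intro j _
  have : Φ j i = Φ i j := by
    conv_lhs => rw [← hΦ]
    simp [Matrix.conjTranspose_apply]
  rw [this]; ring

lemma repr_matE {Φ : Matrix (Fin q) (Fin q) ℝ} (hΦ : Φ.IsHermitian)
    (v : EuclideanSpace ℝ (Fin q)) (i : Fin q) :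
    hΦ.eigenvectorBasis.repr (matE Φ v) i
      = hΦ.eigenvalues i * hΦ.eigenvectorBasis.repr v i := by
  rw [OrthonormalBasis.repr_apply_apply, OrthonormalBasis.repr_apply_apply,
    matE_symm hΦ]
  have h : matE Φ (hΦ.eigenvectorBasis i) = hΦ.eigenvalues i • (hΦ.eigenvectorBasis i) := by
    apply WithLp.ofLp_injective
    rw [matE_eq_mulVec]
    exact_mod_cast hΦ.mulVec_eigenvectorBasis i
  rw [h, real_inner_smul_left]

lemma inner_matE_eq_sum {Φ : Matrix (Fin q) (Fin q) ℝ} (hΦ : Φ.IsHermitian)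
    (v : EuclideanSpace ℝ (Fin q)) :
    ⟪v, matE Φ v⟫ = ∑ i, hΦ.eigenvalues i * (hΦ.eigenvectorBasis.repr v i)^2 := by
  rw [← hΦ.eigenvectorBasis.repr.inner_map_map v (matE Φ v), inner_eq_sum]
  apply Finset.sum_congr rfl; intro i _
  rw [repr_matE hΦ]; ring

lemma normsq_matE_eq_sum {Φ : Matrix (Fin q) (Fin q) ℝ} (hΦ : Φ.IsHermitian)
    (v : EuclideanSpace ℝ (Fin q)) :
    ‖matE Φ v‖^2 = ∑ i, (hΦ.eigenvalues i)^2 * (hΦ.eigenvectorBasis.repr v i)^2 := by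
  rw [← hΦ.eigenvectorBasis.repr.norm_map (matE Φ v), normsq_eq_sum]
  apply Finset.sum_congr rfl; intro i _
  rw [repr_matE hΦ]; ring

lemma normsq_eq_sum_repr {Φ : Matrix (Fin q) (Fin q) ℝ} (hΦ : Φ.IsHermitian)
    (v : EuclideanSpace ℝ (Fin q)) :
    ‖v‖^2 = ∑ i, (hΦ.eigenvectorBasis.repr v i)^2 := by
  rw [← hΦ.eigenvectorBasis.repr.norm_map v, normsq_eq_sum]

lemma quad_lower {Φ : Matrix (Fin q) (Fin q) ℝ} (hΦ : Φ.IsHermitian) {lmin : ℝ}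
    (h : ∀ i, lmin ≤ hΦ.eigenvalues i) (v : EuclideanSpace ℝ (Fin q)) :
    lmin * ‖v‖^2 ≤ ⟪v, matE Φ v⟫ := by
  rw [inner_matE_eq_sum hΦ, normsq_eq_sum_repr hΦ, Finset.mul_sum]
  exact Finset.sum_le_sum fun i _ => mul_le_mul_of_nonneg_right (h i) (sq_nonneg _)

lemma normsq_matE_le {Φ : Matrix (Fin q) (Fin q) ℝ} (hΦ : Φ.IsHermitian) {lmax : ℝ}
    (h0 : ∀ i, 0 ≤ hΦ.eigenvalues i) (h : ∀ i, hΦ.eigenvalues i ≤ lmax)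
    (v : EuclideanSpace ℝ (Fin q)) :
    ‖matE Φ v‖^2 ≤ lmax * ⟪v, matE Φ v⟫ := by
  rw [inner_matE_eq_sum hΦ, normsq_matE_eq_sum hΦ, Finset.mul_sum]
  refine Finset.sum_le_sum fun i _ => ?_
  rw [sq (hΦ.eigenvalues i), mul_assoc]
  exact mul_le_mul_of_nonneg_right (h i) (mul_nonneg (h0 i) (sq_nonneg _))

end MatrixLemmas

-- ============ kron-level lemmas ============
section KronLemmas
variable {q Tf : ℕ}

def sliceq (t : Fin Tf) (v : EfSp q Tf) : EuclideanSpace ℝ (Fin q) := WithLp.toLp 2 (fun i => v (t, i))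

lemma sliceq_kron (Φ : Matrix (Fin q) (Fin q) ℝ) (v : EfSp q Tf) (t : Fin Tf) :
    sliceq t (kronMul Φ v) = matE Φ (sliceq t v) := rfl

lemma innerF_eq (a b : EfSp q Tf) : ⟪a, b⟫ = ∑ t, ⟪sliceq t a, sliceq t b⟫ := by
  simp only [PiLp.inner_apply, RCLike.inner_apply, conj_trivial]
  rw [Fintype.sum_prod_type (f := fun p : Fin Tf × Fin q => b p * a p)]
  rfl

lemma normsqF_eq (v : EfSp q Tf) : ‖v‖^2 = ∑ t, ‖sliceq t v‖^2 := by
  rw [← real_inner_self_eq_norm_sq, innerF_eq]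
  exact Finset.sum_congr rfl fun t _ => real_inner_self_eq_norm_sq _

lemma kron_quad_lower {Φ : Matrix (Fin q) (Fin q) ℝ} (hΦ : Φ.IsHermitian) {lmin : ℝ}
    (h : ∀ i, lmin ≤ hΦ.eigenvalues i) (v : EfSp q Tf) :
    lmin * ‖v‖^2 ≤ ⟪v, kronMul Φ v⟫ := by
  rw [innerF_eq, normsqF_eq, Finset.mul_sum]
  refine Finset.sum_le_sum fun t _ => ?_
  rw [sliceq_kron]; exact quad_lower hΦ h _

lemma kron_normsq_le {Φ : Matrix (Fin q) (Fin q) ℝ} (hΦ : Φ.IsHermitian) {lmax : ℝ}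
    (h0 : ∀ i, 0 ≤ hΦ.eigenvalues i) (h : ∀ i, hΦ.eigenvalues i ≤ lmax) (v : EfSp q Tf) :
    ‖kronMul Φ v‖^2 ≤ lmax * ⟪v, kronMul Φ v⟫ := by
  rw [innerF_eq, normsqF_eq, Finset.mul_sum]
  refine Finset.sum_le_sum fun t _ => ?_
  rw [sliceq_kron]; exact normsq_matE_le hΦ h0 h _

lemma kron_symm {Φ : Matrix (Fin q) (Fin q) ℝ} (hΦ : Φ.IsHermitian) (a b : EfSp q Tf) :
    ⟪a, kronMul Φ b⟫ = ⟪kronMul Φ a, b⟫ := by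
  rw [innerF_eq, innerF_eq]
  refine Finset.sum_congr rfl fun t _ => ?_
  rw [sliceq_kron, sliceq_kron]
  exact matE_symm hΦ _ _

lemma wnormSq_eq_inner (Φ : Matrix (Fin q) (Fin q) ℝ) (v : EfSp q Tf) :
    wnormSq Φ v = ⟪v, kronMul Φ v⟫ := by
  simp only [PiLp.inner_apply, RCLike.inner_apply, conj_trivial, wnormSq, kronMul]
  rw [Fintype.sum_prod_type (f := fun p : Fin Tf × Fin q => (∑ j, Φ p.2 j * v (p.1, j)) * v p)]
  apply Finset.sum_congr rfl; intro t _
  apply Finset.sum_congr rfl; intro i _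
  rw [Finset.sum_mul]
  apply Finset.sum_congr rfl; intro j _
  ring

lemma kron_add (Φ : Matrix (Fin q) (Fin q) ℝ) (a b : EfSp q Tf) :
    kronMul Φ (a + b) = kronMul Φ a + kronMul Φ b := by
  ext p; simp [kronMul, mul_add, Finset.sum_add_distrib]

lemma kron_sub (Φ : Matrix (Fin q) (Fin q) ℝ) (a b : EfSp q Tf) :
    kronMul Φ (a - b) = kronMul Φ a - kronMul Φ b := by
  ext p; simp [kronMul, mul_sub, Finset.sum_sub_distrib]

lemma kron_smul (Φ : Matrix (Fin q) (Fin q) ℝ) (c : ℝ) (a : EfSp q Tf) :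
    kronMul Φ (c • a) = c • kronMul Φ a := by
  ext p
  simp only [kronMul, PiLp.smul_apply, smul_eq_mul, Finset.mul_sum]
  apply Finset.sum_congr rfl; intro j _; ring

lemma wnormSq_expand {Φ : Matrix (Fin q) (Fin q) ℝ} (hΦ : Φ.IsHermitian) (a b : EfSp q Tf) :
    wnormSq Φ (a + b) = wnormSq Φ a + 2 * ⟪kronMul Φ a, b⟫ + wnormSq Φ b := by
  simp only [wnormSq_eq_inner, kron_add, inner_add_left, inner_add_right]
  rw [kron_symm hΦ a b, real_inner_comm (kronMul Φ a) b]
  ring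

end KronLemmas

-- ============ projection onto an "affine" set ============
section Proj
variable {E : Type*} [NormedAddCommGroup E] [InnerProductSpace ℝ E]
variable {S : Set E} {PA : E → E}

lemma proj_aux (u v : E) (t : ℝ) (hd : ‖u‖ ≤ ‖u - t • v‖) :
    0 ≤ t^2 * ‖v‖^2 - 2 * t * ⟪u, v⟫ := by
  have hsq : ‖u‖^2 ≤ ‖u - t • v‖^2 := pow_le_pow_left₀ (norm_nonneg _) hd 2
  rw [norm_sub_sq_real, real_inner_smul_right, norm_smul] at hsq
  simp only [Real.norm_eq_abs, mul_pow, sq_abs] at hsq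
  nlinarith [hsq]

lemma proj_char (haff : ∀ y ∈ S, ∀ z ∈ S, ∀ t : ℝ, z + t • (y - z) ∈ S)
    (hPA : ∀ x, PA x ∈ S ∧ ∀ y ∈ S, dist x (PA x) ≤ dist x y)
    (x : E) {y : E} (hy : y ∈ S) : ⟪x - PA x, y - PA x⟫ = 0 := by
  have key : ∀ t : ℝ, 0 ≤ t^2 * ‖y - PA x‖^2 - 2 * t * ⟪x - PA x, y - PA x⟫ := by
    intro t
    have hmem := haff y hy (PA x) (hPA x).1 t
    have hd := (hPA x).2 _ hmem
    rw [dist_eq_norm, dist_eq_norm] at hd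
    have hexp : x - (PA x + t • (y - PA x)) = (x - PA x) - t • (y - PA x) := by abel
    rw [hexp] at hd
    exact proj_aux _ _ _ hd
  set b : ℝ := ⟪x - PA x, y - PA x⟫ with hb
  set c : ℝ := ‖y - PA x‖^2 with hc
  have hc0 : (0:ℝ) ≤ c := by rw [hc]; positivity
  rcases hc0.eq_or_lt with h | h
  · have h1 := key 1
    have h2 := key (-1)
    nlinarith
  · have hk := key (b / c)
    have hcne : c ≠ 0 := ne_of_gt h
    have heq : (b/c)^2 * c - 2*(b/c)*b = -(b^2/c) := by field_simp; ring
    rw [heq] at hk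
    have h2 : b^2 / c ≤ 0 := by linarith
    have h3 : b^2 ≤ 0 := by
      by_contra hcon
      push_neg at hcon
      exact absurd (div_pos hcon h) (by linarith)
    have hb2 : b^2 = 0 := le_antisymm h3 (sq_nonneg b)
    exact pow_eq_zero_iff (n := 2) (by norm_num) |>.mp hb2

lemma proj_eq_of (hPA : ∀ x, PA x ∈ S ∧ ∀ y ∈ S, dist x (PA x) ≤ dist x y)
    (haff : ∀ y ∈ S, ∀ z ∈ S, ∀ t : ℝ, z + t • (y - z) ∈ S)
    (x : E) {p : E} (hp : p ∈ S) (h : ∀ y ∈ S, ⟪x - p, y - p⟫ = 0) : PA x = p := by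
  have h1 : ⟪x - PA x, p - PA x⟫ = 0 := proj_char haff hPA x hp
  have h2 : ⟪x - p, PA x - p⟫ = 0 := h _ (hPA x).1
  have h3 : ‖PA x - p‖^2 = 0 := by
    rw [← real_inner_self_eq_norm_sq]
    nth_rewrite 1 [show (PA x - p : E) = (x - p) - (x - PA x) from by abel]
    rw [inner_sub_left, h2]
    have hflip : ⟪x - PA x, PA x - p⟫ = -⟪x - PA x, p - PA x⟫ := by
      rw [← inner_neg_right]; congr 1; abel
    rw [hflip, h1]; ring
  have h4 : ‖PA x - p‖ = 0 := by
    have := sq_eq_zero_iff.mp h3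
    exact this
  rw [norm_eq_zero, sub_eq_zero] at h4
  exact h4

lemma proj_nonexp (hPA : ∀ x, PA x ∈ S ∧ ∀ y ∈ S, dist x (PA x) ≤ dist x y)
    (haff : ∀ y ∈ S, ∀ z ∈ S, ∀ t : ℝ, z + t • (y - z) ∈ S)
    (x y : E) : ‖PA x - PA y‖ ≤ ‖x - y‖ := by
  have h1 : ⟪x - PA x, PA y - PA x⟫ = 0 := proj_char haff hPA x (hPA y).1
  have h2 : ⟪y - PA y, PA x - PA y⟫ = 0 := proj_char haff hPA y (hPA x).1
  have hz : ⟪(x - PA x) - (y - PA y), PA x - PA y⟫ = 0 := by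
    rw [inner_sub_left, h2]
    have hflip : ⟪x - PA x, PA x - PA y⟫ = -⟪x - PA x, PA y - PA x⟫ := by
      rw [← inner_neg_right]; congr 1; abel
    rw [hflip, h1]; ring
  have key : ‖PA x - PA y‖^2 = ⟪x - y, PA x - PA y⟫ := by
    have e1 : (PA x - PA y : E) = (x - y) - ((x - PA x) - (y - PA y)) := by abel
    rw [← real_inner_self_eq_norm_sq]
    nth_rewrite 1 [e1]
    rw [inner_sub_left, hz]
    ring
  have hle := real_inner_le_norm (x - y) (PA x - PA y)
  rcases le_or_gt ‖PA x - PA y‖ 0 with h | h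
  · exact h.trans (norm_nonneg _)
  · nlinarith [key, hle]

end Proj

-- ============ more small lemmas ============
lemma piFT_sub {q Tini Tf : ℕ} (u v : EfSp q Tf) :
    (piFT (u - v) : Efull q Tini Tf) = piFT u - piFT v := by
  ext p; rcases p with ⟨s | t, i⟩ <;> simp [piFT]

lemma piIni_piFT {q Tini Tf : ℕ} (u : EfSp q Tf) :
    piIni (piFT u : Efull q Tini Tf) = 0 := by
  ext p; rcases p with ⟨t, i⟩; rfl

lemma sq_le_helper {a b : ℝ} (ha : 0 ≤ a) (hb : 0 ≤ b) (h : a^2 ≤ b^2) : a ≤ b := by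
  nlinarith

lemma efull_ext {q Tini Tf : ℕ} (u v : Efull q Tini Tf)
    (h1 : piIni u = piIni v) (h2 : piF u = piF v) : u = v := by
  ext p; rcases p with ⟨s | t, i⟩
  · exact congrArg (fun f => f (s, i)) h1
  · exact congrArg (fun f => f (t, i)) h2

lemma midpoint_aux {q Tf : ℕ} {Φ : Matrix (Fin q) (Fin q) ℝ} (hH : Φ.IsHermitian)
    (a b : EfSp q Tf)
    (hab : wnormSq Φ a = wnormSq Φ b)
    (hmid : wnormSq Φ a ≤ wnormSq Φ (a + (1/2:ℝ) • (b - a))) :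
    wnormSq Φ ((1/2:ℝ) • (b - a)) ≤ 0 := by
  have hb : b = a + (2:ℝ) • ((1/2:ℝ) • (b - a)) := by
    rw [smul_smul]; norm_num
  have e1 : wnormSq Φ (a + (1/2:ℝ) • (b - a))
      = wnormSq Φ a + 2*⟪kronMul Φ a, (1/2:ℝ) • (b - a)⟫ + wnormSq Φ ((1/2:ℝ) • (b - a)) :=
    wnormSq_expand hH a _
  have hsm : wnormSq Φ ((2:ℝ) • ((1/2:ℝ) • (b - a))) = 4 * wnormSq Φ ((1/2:ℝ) • (b - a)) := by
    rw [wnormSq_eq_inner, wnormSq_eq_inner, kron_smul, real_inner_smul_left,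
      real_inner_smul_right]
    ring
  have e2 : wnormSq Φ b
      = wnormSq Φ a + 4*⟪kronMul Φ a, (1/2:ℝ) • (b - a)⟫ + 4 * wnormSq Φ ((1/2:ℝ) • (b - a)) := by
    nth_rewrite 1 [hb]
    rw [wnormSq_expand hH a _, real_inner_smul_right, hsm]
    ring
  linarith

set_option maxHeartbeats 2000000 in
theorem statement2
    (q Tini Tf : ℕ) (hq : 0 < q) (hTini : 0 < Tini) (hTf : 0 < Tf)
    (Φ : Matrix (Fin q) (Fin q) ℝ) (hΦ : Φ.PosDef)
    (V : Submodule ℝ (Efull q Tini Tf))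
    (wini : EiniSp q Tini) (wref : EfSp q Tf)
    (hA : (Aset V wini).Nonempty)
    -- P_A is the Euclidean (metric) projection onto the affine set A
    (PA : Efull q Tini Tf → Efull q Tini Tf)
    (hPA : ∀ x, PA x ∈ Aset V wini ∧ ∀ y ∈ Aset V wini, dist x (PA x) ≤ dist x y)
    -- λ_max(Φ), the largest eigenvalue of Φ
    (lmax : ℝ) (hlmax : IsGreatest (Set.range hΦ.1.eigenvalues) lmax)
    -- step size 0 < α < 1/λ_max(Φ)
    (α : ℝ) (hα0 : 0 < α) (hα1 : α < 1 / lmax)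
    -- the projected-gradient iteration, started from an arbitrary w_1
    (w : ℕ → Efull q Tini Tf)
    (hw : ∀ k, 1 ≤ k →
      w (k + 1) = PA (w k - (2 * α) • piFT (kronMul Φ (piF (w k) - wref)))) :
    -- {w_k} converges to the unique minimizer of h over A
    ∃ wstar : Efull q Tini Tf,
      (wstar ∈ Aset V wini ∧
        ∀ y ∈ Aset V wini, wnormSq Φ (piF wstar - wref) ≤ wnormSq Φ (piF y - wref)) ∧
      (∀ w' ∈ Aset V wini,
        (∀ y ∈ Aset V wini, wnormSq Φ (piF w' - wref) ≤ wnormSq Φ (piF y - wref)) →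
          w' = wstar) ∧
      Tendsto w atTop (𝓝 wstar) := by
  -- the affine property of A
  have haff : ∀ y ∈ Aset V wini, ∀ z ∈ Aset V wini, ∀ t : ℝ,
      z + t • (y - z) ∈ Aset V wini := by
    rintro y ⟨hyV, hyI⟩ z ⟨hzV, hzI⟩ t
    refine ⟨V.add_mem hzV (V.smul_mem t (V.sub_mem hyV hzV)), ?_⟩
    have h1 : piIni (z + t • (y - z)) = piIni z + t • (piIni y - piIni z) := rfl
    rw [h1, hyI, hzI, sub_self, smul_zero, add_zero]
  -- eigenvalue bounds
  have hnq : Nonempty (Fin q) := ⟨⟨0, hq⟩⟩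
  obtain ⟨i0, -, hi0⟩ := Finset.exists_min_image (Finset.univ : Finset (Fin q))
    hΦ.1.eigenvalues ⟨⟨0, hq⟩, Finset.mem_univ _⟩
  have heig_le : ∀ i, hΦ.1.eigenvalues i ≤ lmax := fun i => hlmax.2 ⟨i, rfl⟩
  have heig_nonneg : ∀ i, 0 ≤ hΦ.1.eigenvalues i := fun i => (hΦ.eigenvalues_pos i).le
  obtain ⟨lmin, hlminpos, hlmin_le, hlminle⟩ :
      ∃ l : ℝ, 0 < l ∧ (∀ i, l ≤ hΦ.1.eigenvalues i) ∧ l ≤ lmax :=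
    ⟨hΦ.1.eigenvalues i0, hΦ.eigenvalues_pos i0,
      fun i => hi0 i (Finset.mem_univ i), heig_le i0⟩
  have hlmaxpos : 0 < lmax := lt_of_lt_of_le hlminpos hlminle
  have hαl : α * lmax < 1 := (lt_div_iff₀ hlmaxpos).mp hα1
  -- contraction constant
  set Kc : ℝ := 1 - 4*α*lmin*(1 - α*lmax) with hKcdef
  have hKc0 : 0 ≤ Kc := by
    have h1 : 0 ≤ α * (1 - α*lmax) := mul_nonneg hα0.le (by linarith)
    nlinarith [sq_nonneg (1 - 2*α*lmax)]
  have hKc1 : Kc < 1 := by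
    have h1 : 0 < α * lmin * (1 - α*lmax) :=
      mul_pos (mul_pos hα0 hlminpos) (by linarith)
    rw [hKcdef]; nlinarith
  set Kr : ℝ := Real.sqrt Kc with hKrdef
  have hKr0 : 0 ≤ Kr := Real.sqrt_nonneg _
  have hKrsq : Kr^2 = Kc := Real.sq_sqrt hKc0
  have hKr1 : Kr < 1 := by
    calc Kr < Real.sqrt 1 := Real.sqrt_lt_sqrt hKc0 hKc1
    _ = 1 := Real.sqrt_one
  -- one-step estimate on the final block
  have hstep : ∀ e : EfSp q Tf, ‖e - (2*α) • kronMul Φ e‖^2 ≤ Kc * ‖e‖^2 := by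
    intro e
    have hQ := kron_quad_lower hΦ.1 hlmin_le e
    have hN := kron_normsq_le hΦ.1 heig_nonneg heig_le e
    have hexp : ‖e - (2*α) • kronMul Φ e‖^2
        = ‖e‖^2 - 2*((2*α) * ⟪e, kronMul Φ e⟫) + (2*α)^2 * ‖kronMul Φ e‖^2 := by
      rw [norm_sub_sq_real, real_inner_smul_right, norm_smul]
      simp only [Real.norm_eq_abs, mul_pow, sq_abs]
    rw [hexp, hKcdef]
    have h1 : (2*α)^2 * ‖kronMul Φ e‖^2 ≤ (2*α)^2 * (lmax * ⟪e, kronMul Φ e⟫) :=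
      mul_le_mul_of_nonneg_left hN (by positivity)
    have h2 : (4*α*(1 - α*lmax)) * (lmin * ‖e‖^2)
        ≤ (4*α*(1 - α*lmax)) * ⟪e, kronMul Φ e⟫ :=
      mul_le_mul_of_nonneg_left hQ (by nlinarith)
    nlinarith [h1, h2]
  -- minimality
  have hQnonneg : ∀ v : EfSp q Tf, 0 ≤ wnormSq Φ v := by
    intro v
    rw [wnormSq_eq_inner]
    have h1 := kron_quad_lower hΦ.1 hlmin_le v
    have h2 : 0 ≤ lmin * ‖v‖^2 := mul_nonneg hlminpos.le (sq_nonneg _)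
    linarith
  have hQzero : ∀ v : EfSp q Tf, wnormSq Φ v ≤ 0 → v = 0 := by
    intro v hv
    rw [wnormSq_eq_inner] at hv
    have h1 := kron_quad_lower hΦ.1 hlmin_le v
    have h2 : ‖v‖^2 ≤ 0 := by
      by_contra hcon
      push_neg at hcon
      have := mul_pos hlminpos hcon
      linarith
    have h3 : ‖v‖^2 = 0 := le_antisymm h2 (sq_nonneg _)
    have h4 : ‖v‖ = 0 := sq_eq_zero_iff.mp h3
    exact norm_eq_zero.mp h4
  -- the iteration map
  set F : Efull q Tini Tf → Efull q Tini Tf :=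
    fun x => PA (x - (2*α) • piFT (kronMul Φ (piF x - wref))) with hF
  have hFS : ∀ x, F x ∈ Aset V wini := fun x => (hPA _).1
  -- contraction on A
  have hcontr : ∀ x ∈ Aset V wini, ∀ y ∈ Aset V wini,
      ‖F x - F y‖ ≤ Kr * ‖x - y‖ := by
    intro x hx y hy
    have h1 : ‖F x - F y‖ ≤ ‖(x - (2*α) • piFT (kronMul Φ (piF x - wref)))
        - (y - (2*α) • piFT (kronMul Φ (piF y - wref)))‖ :=
      proj_nonexp hPA haff _ _
    have e1 : (piF x - wref) - (piF y - wref) = piF (x - y) := by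
      have h : piF (x - y) = piF x - piF y := rfl
      rw [h]; abel
    have hPdiff : (piFT (kronMul Φ (piF (x - y))) : Efull q Tini Tf)
        = piFT (kronMul Φ (piF x - wref)) - piFT (kronMul Φ (piF y - wref)) := by
      rw [← piFT_sub, ← kron_sub, e1]
    have harg : (x - (2*α) • piFT (kronMul Φ (piF x - wref)))
        - (y - (2*α) • piFT (kronMul Φ (piF y - wref)))
        = (x - y) - (2*α) • piFT (kronMul Φ (piF (x - y))) := by
      rw [hPdiff, smul_sub]; abel
    rw [harg] at h1
    set d : Efull q Tini Tf := x - y with hd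
    set z : Efull q Tini Tf := d - (2*α) • piFT (kronMul Φ (piF d)) with hz
    have hIni : piIni z = 0 := by
      have h2 : piIni z = piIni d - (2*α) • piIni (piFT (kronMul Φ (piF d))) := rfl
      have h3 : piIni d = piIni x - piIni y := rfl
      rw [h2, piIni_piFT, smul_zero, sub_zero, h3, hx.2, hy.2, sub_self]
    have hPiF : piF z = piF d - (2*α) • kronMul Φ (piF d) := rfl
    have h4 : ‖piF d‖^2 ≤ ‖d‖^2 := by
      have h6 := sq_nonneg ‖piIni d‖
      rw [normsq_split d]; linarith
    have hnz : ‖z‖^2 ≤ Kc * ‖d‖^2 := by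
      rw [normsq_split z, hIni, hPiF]
      calc ‖(0 : EiniSp q Tini)‖^2 + ‖piF d - (2*α) • kronMul Φ (piF d)‖^2
          = ‖piF d - (2*α) • kronMul Φ (piF d)‖^2 := by simp
        _ ≤ Kc * ‖piF d‖^2 := hstep (piF d)
        _ ≤ Kc * ‖d‖^2 := mul_le_mul_of_nonneg_left h4 hKc0
    refine h1.trans (sq_le_helper (norm_nonneg _) (by positivity) ?_)
    rw [mul_pow, hKrsq]
    exact hnz
  -- Banach fixed point on the subtype
  have hclosed : IsClosed (Aset V wini) := by
    have h1 : IsClosed (V : Set (Efull q Tini Tf)) := Submodule.closed_of_finiteDimensional V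
    have hcont : Continuous (piIniL q Tini Tf) := LinearMap.continuous_of_finiteDimensional _
    have h2 : IsClosed {u : Efull q Tini Tf | piIni u = wini} := by
      have h3 : {u : Efull q Tini Tf | piIni u = wini} = (piIniL q Tini Tf) ⁻¹' {wini} := rfl
      rw [h3]; exact IsClosed.preimage hcont isClosed_singleton
    exact h1.inter h2
  haveI : CompleteSpace (Aset V wini) := hclosed.completeSpace_coe
  haveI : Nonempty (Aset V wini) := hA.to_subtype
  set FS : Aset V wini → Aset V wini := fun x => ⟨F x.1, hFS _⟩ with hFSdef
  set K : NNReal := ⟨Kr, hKr0⟩ with hKdef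
  have hc : ContractingWith K FS := by
    constructor
    · rw [← NNReal.coe_lt_one]; exact hKr1
    · apply LipschitzWith.of_dist_le_mul
      intro a b
      rw [Subtype.dist_eq, Subtype.dist_eq, dist_eq_norm]
      exact hcontr a.1 a.2 b.1 b.2
  obtain ⟨wstarS, hfixS, htendS⟩ :
      ∃ p : Aset V wini, FS p = p ∧
        ∀ x0, Tendsto (fun n => FS^[n] x0) atTop (𝓝 p) :=
    ⟨ContractingWith.fixedPoint FS hc, hc.fixedPoint_isFixedPt,
      fun x0 => hc.tendsto_iterate_fixedPoint x0⟩
  set wstar : Efull q Tini Tf := wstarS.1 with hwstardef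
  have hwstarS_mem : wstar ∈ Aset V wini := wstarS.2
  have hfix : F wstar = wstar := congrArg Subtype.val hfixS
  -- the fixed point is a minimizer
  have horth : ∀ y ∈ Aset V wini,
      ⟪kronMul Φ (piF wstar - wref), piF y - piF wstar⟫ = 0 := by
    intro y hy
    have h := proj_char haff hPA
      (wstar - (2*α) • piFT (kronMul Φ (piF wstar - wref))) hy
    have hPAeq : PA (wstar - (2*α) • piFT (kronMul Φ (piF wstar - wref))) = wstar := hfix
    rw [hPAeq] at h
    have h2 : (wstar - (2*α) • piFT (kronMul Φ (piF wstar - wref))) - wstar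
        = (-(2*α)) • piFT (kronMul Φ (piF wstar - wref)) := by
      rw [neg_smul]; abel
    rw [h2, real_inner_smul_left] at h
    have h3 : ⟪(piFT (kronMul Φ (piF wstar - wref)) : Efull q Tini Tf), y - wstar⟫ = 0 := by
      have hne : (-(2*α)) ≠ 0 := by
        have : (0:ℝ) < 2*α := by linarith
        intro hcon; rw [neg_eq_zero] at hcon; linarith
      exact (mul_eq_zero.mp h).resolve_left hne
    rw [inner_piFT] at h3
    have h4 : piF (y - wstar) = piF y - piF wstar := rfl
    rw [h4] at h3
    exact h3
  have hmin : ∀ y ∈ Aset V wini,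
      wnormSq Φ (piF wstar - wref) ≤ wnormSq Φ (piF y - wref) := by
    intro y hy
    have hdecomp : piF y - wref = (piF wstar - wref) + (piF y - piF wstar) := by abel
    rw [hdecomp, wnormSq_expand hΦ.1]
    have h0 := horth y hy
    have hQ := hQnonneg (piF y - piF wstar)
    linarith
  -- uniqueness of the minimizer
  have huniq : ∀ w' ∈ Aset V wini,
      (∀ y ∈ Aset V wini, wnormSq Φ (piF w' - wref) ≤ wnormSq Φ (piF y - wref)) →
      w' = wstar := by
    intro w' hw' hmin'
    have hm : w' + (1/2 : ℝ) • (wstar - w') ∈ Aset V wini :=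
      haff wstar hwstarS_mem w' hw' (1/2)
    have hsub : (piF wstar - wref) - (piF w' - wref) = piF wstar - piF w' := by abel
    have hm2 : piF (w' + (1/2:ℝ) • (wstar - w')) - wref
        = (piF w' - wref) + (1/2:ℝ) • ((piF wstar - wref) - (piF w' - wref)) := by
      have h1 : piF (w' + (1/2:ℝ) • (wstar - w'))
          = piF w' + (1/2:ℝ) • (piF wstar - piF w') := rfl
      rw [h1, hsub]
      abel
    have hmid : wnormSq Φ (piF w' - wref)
        ≤ wnormSq Φ ((piF w' - wref)
            + (1/2:ℝ) • ((piF wstar - wref) - (piF w' - wref))) := by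
      have h := hmin' _ hm
      rw [hm2] at h
      exact h
    have hab : wnormSq Φ (piF w' - wref) = wnormSq Φ (piF wstar - wref) :=
      le_antisymm (hmin' wstar hwstarS_mem) (hmin w' hw')
    have hQs := midpoint_aux hΦ.1 (piF w' - wref) (piF wstar - wref) hab hmid
    have hs0 := hQzero _ hQs
    have hd0 : (piF wstar - wref) - (piF w' - wref) = 0 := by
      rcases smul_eq_zero.mp hs0 with h | h
      · norm_num at h
      · exact h
    rw [hsub, sub_eq_zero] at hd0
    exact efull_ext w' wstar (by rw [hw'.2, hwstarS_mem.2]) hd0.symm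
  -- convergence of the iterates
  have hw2S : w 2 ∈ Aset V wini := by
    rw [hw 1 le_rfl]; exact (hPA _).1
  have hiter : ∀ n : ℕ, (FS^[n] ⟨w 2, hw2S⟩ : Aset V wini).1 = w (n + 2) := by
    intro n
    induction n with
    | zero => rfl
    | succ n ih =>
      rw [Function.iterate_succ_apply']
      show F (FS^[n] ⟨w 2, hw2S⟩ : Aset V wini).1 = w (n + 1 + 2)
      rw [ih]
      have h := hw (n + 2) (by omega)
      rw [hF]
      have hidx : n + 1 + 2 = (n + 2) + 1 := by omega
      rw [hidx, h]
  have htend1 : Tendsto (fun n => (FS^[n] ⟨w 2, hw2S⟩ : Aset V wini)) atTop (𝓝 wstarS) :=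
    htendS _
  have htend2 : Tendsto (fun n => w (n + 2)) atTop (𝓝 wstar) := by
    have h := (continuous_subtype_val.tendsto wstarS).comp htend1
    have heq : (fun n => ((FS^[n] ⟨w 2, hw2S⟩ : Aset V wini) : Efull q Tini Tf))
        = fun n => w (n + 2) := funext hiter
    rw [show (Subtype.val ∘ fun n => (FS^[n] ⟨w 2, hw2S⟩ : Aset V wini))
        = fun n => ((FS^[n] ⟨w 2, hw2S⟩ : Aset V wini) : Efull q Tini Tf) from rfl, heq] at h
    exact h
  have htend : Tendsto w atTop (𝓝 wstar) := (tendsto_add_atTop_iff_nat 2).mp htend2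
  exact ⟨wstar, ⟨hwstarS_mem, hmin⟩, huniq, htend⟩


end LQT2
end

section
/- (Convergence of the Davis–Yin splitting algorithm.) Let f, g : ℝ^d → ℝ ∪ {+∞} be proper, convex, lower semicontinuous functions, let h : ℝ^d → ℝ be convex and differentiable with γ-Lipschitz gradient for some γ > 0, and let α ∈ (0, 2/γ). Assume there exist x* ∈ ℝ^d, u ∈ ∂f(x*), and v ∈ ∂g(x*) with u + v + ∇h(x*) = 0. Then for any initial point w_1 ∈ ℝ^d, the sequence defined by w_{k+1} = w_k − prox_{αg}(w_k) + prox_{αf}( 2 prox_{αg}(w_k) − w_k − α ∇h(prox_{αg}(w_k)) ) converges to some w̄ ∈ ℝ^d, and the point x̄ = prox_{αg}(w̄) satisfies 0 ∈ ∂f(x̄) + ∂g(x̄) + ∇h(x̄); in particular x̄ is a global minimizer of f + g + h. -/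
/-!
STATEMENT 5: Convergence of the Davis–Yin three-operator splitting algorithm.
Extended-real-valued functions ℝ^d → ℝ ∪ {+∞} are modeled as maps into `EReal`
that never take the value ⊥.
-/

open scoped RealInnerProductSpace
open Filter Topology

-- Auxiliary lemmas
set_option linter.unusedSectionVars false
set_option linter.unusedVariables false

open scoped RealInnerProductSpace
open Filter Topology
open intervalIntegral

section DYauxSec

variable {E : Type*} [NormedAddCommGroup E] [InnerProductSpace ℝ E]

lemma DYaux.prox_ne_top (g : E → EReal) (hg_ne_bot : ∀ x, g x ≠ ⊥)
    (hg_proper : ∃ x, g x ≠ ⊤) (α : ℝ)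
    (p : E → E)
    (hp : ∀ x z : E, g (p x) + ((1 / (2 * α) * ‖p x - x‖ ^ 2 : ℝ) : EReal) ≤
        g z + ((1 / (2 * α) * ‖z - x‖ ^ 2 : ℝ) : EReal))
    (x : E) : g (p x) ≠ ⊤ := by
  obtain ⟨z0, hz0⟩ := hg_proper
  obtain ⟨r, hr⟩ : ∃ r : ℝ, g z0 = r := ⟨(g z0).toReal, (EReal.coe_toReal hz0 (hg_ne_bot z0)).symm⟩
  intro htop
  have := hp x z0
  rw [htop, hr, EReal.top_add_coe, ← EReal.coe_add] at this
  exact (EReal.coe_lt_top _).not_ge this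

lemma DYaux.prox_subgrad (g : E → EReal) (hg_ne_bot : ∀ x, g x ≠ ⊥)
    (hg_convex : ∀ x y : E, ∀ t : ℝ, 0 ≤ t → t ≤ 1 →
      g (t • x + (1 - t) • y) ≤ (t : EReal) * g x + ((1 - t : ℝ) : EReal) * g y)
    (α : ℝ) (hα : 0 < α) (p : E → E)
    (hp : ∀ x z : E, g (p x) + ((1 / (2 * α) * ‖p x - x‖ ^ 2 : ℝ) : EReal) ≤
        g z + ((1 / (2 * α) * ‖z - x‖ ^ 2 : ℝ) : EReal))
    (hptop : ∀ x, g (p x) ≠ ⊤)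
    (x z : E) :
    g (p x) + ((⟪α⁻¹ • (x - p x), z - p x⟫ : ℝ) : EReal) ≤ g z := by
  rcases eq_or_ne (g z) ⊤ with hz | hz
  · exact hz ▸ le_top
  obtain ⟨r, hr⟩ : ∃ r : ℝ, g z = r := ⟨(g z).toReal, (EReal.coe_toReal hz (hg_ne_bot z)).symm⟩
  obtain ⟨s, hs⟩ : ∃ s : ℝ, g (p x) = s :=
    ⟨(g (p x)).toReal, (EReal.coe_toReal (hptop x) (hg_ne_bot _)).symm⟩
  set P := p x with hP
  rw [hs, hr, ← EReal.coe_add, EReal.coe_le_coe_iff]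
  have hinner : ⟪α⁻¹ • (x - P), z - P⟫ = -((1/α) * ⟪P - x, z - P⟫) := by
    rw [real_inner_smul_left]
    rw [show (x - P : E) = -(P - x) by abel, inner_neg_left]
    ring
  rw [hinner]
  rw [← sub_nonneg]
  have key : ∀ t : ℝ, 0 < t → t ≤ 1 →
      s - r ≤ (1/α) * ⟪P - x, z - P⟫ + t * ((1/(2*α)) * ‖z - P‖^2) := by
    intro t ht0 ht1
    have hconv := hg_convex z P t ht0.le ht1
    rw [hr, hs, ← EReal.coe_mul, ← EReal.coe_mul, ← EReal.coe_add] at hconv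
    have hmin := hp x (t • z + (1 - t) • P)
    rw [hs, ← hP] at hmin
    have h2 : (s : EReal) + ((1 / (2 * α) * ‖P - x‖ ^ 2 : ℝ) : EReal) ≤
        ((t * r + (1 - t) * s : ℝ) : EReal) +
          ((1 / (2 * α) * ‖t • z + (1 - t) • P - x‖ ^ 2 : ℝ) : EReal) :=
      le_trans hmin (add_le_add_left hconv _)
    rw [← EReal.coe_add, ← EReal.coe_add, EReal.coe_le_coe_iff] at h2
    have hexp : t • z + (1 - t) • P - x = (P - x) + t • (z - P) := by
      rw [smul_sub, sub_smul, one_smul]; abel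
    rw [hexp] at h2
    have hnorm : ‖(P - x) + t • (z - P)‖^2
        = ‖P - x‖^2 + 2 * (t * ⟪P - x, z - P⟫) + t^2 * ‖z - P‖^2 := by
      rw [norm_add_sq_real, real_inner_smul_right, norm_smul]
      simp [mul_pow]
    rw [hnorm] at h2
    have h3 : t * (s - r) ≤ t * ((1/α) * ⟪P - x, z - P⟫ + t * ((1/(2*α)) * ‖z - P‖^2)) := by
      have h1α : (1:ℝ)/α = 2*(1/(2*α)) := by field_simp
      rw [h1α]
      ring_nf at h2 ⊢
      linarith
    exact le_of_mul_le_mul_left h3 ht0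
  have hfin : s - r ≤ (1/α) * ⟪P - x, z - P⟫ := by
    set C := (1/(2*α)) * ‖z - P‖^2 with hC
    have hC0 : 0 ≤ C := by positivity
    refine le_of_forall_pos_le_add (fun ε hε => ?_)
    have ht0 : (0:ℝ) < min 1 (ε/(C+1)) := lt_min one_pos (by positivity)
    have := key _ ht0 (min_le_left _ _)
    have htC : (min 1 (ε/(C+1))) * C ≤ ε := by
      calc (min 1 (ε/(C+1))) * C ≤ (ε/(C+1)) * C :=
            mul_le_mul_of_nonneg_right (min_le_right _ _) hC0
        _ ≤ ε := by rw [div_mul_eq_mul_div, div_le_iff₀ (by linarith)]; nlinarith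
    linarith
  linarith

lemma DYaux.prox_mono (g : E → EReal) (hg_ne_bot : ∀ x, g x ≠ ⊥) (p : E → E)
    (hptop : ∀ x, g (p x) ≠ ⊤) (α : ℝ) (hα : 0 < α)
    (hsub : ∀ x z : E, g (p x) + ((⟪α⁻¹ • (x - p x), z - p x⟫ : ℝ) : EReal) ≤ g z)
    (x y : E) : 0 ≤ ⟪(x - p x) - (y - p y), p x - p y⟫ := by
  obtain ⟨s, hs⟩ : ∃ s : ℝ, g (p x) = s :=
    ⟨(g (p x)).toReal, (EReal.coe_toReal (hptop x) (hg_ne_bot _)).symm⟩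
  obtain ⟨s', hs'⟩ : ∃ s' : ℝ, g (p y) = s' :=
    ⟨(g (p y)).toReal, (EReal.coe_toReal (hptop y) (hg_ne_bot _)).symm⟩
  have h1 := hsub x (p y)
  have h2 := hsub y (p x)
  rw [hs, hs', ← EReal.coe_add, EReal.coe_le_coe_iff] at h1
  rw [hs, hs', ← EReal.coe_add, EReal.coe_le_coe_iff] at h2
  rw [real_inner_smul_left] at h1 h2
  have e1 : ⟪x - p x, p y - p x⟫ = -⟪x - p x, p x - p y⟫ := by
    rw [show (p y - p x : E) = -(p x - p y) by abel, inner_neg_right]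
  rw [e1] at h1
  have hD : 0 ≤ α⁻¹ * (⟪x - p x, p x - p y⟫ - ⟪y - p y, p x - p y⟫) := by
    have hαi : (0:ℝ) ≤ α⁻¹ := (inv_pos.2 hα).le
    nlinarith [h1, h2]
  have hD2 : 0 ≤ ⟪x - p x, p x - p y⟫ - ⟪y - p y, p x - p y⟫ := by
    have := mul_nonneg hα.le hD
    have e2 : α * (α⁻¹ * (⟪x - p x, p x - p y⟫ - ⟪y - p y, p x - p y⟫))
        = ⟪x - p x, p x - p y⟫ - ⟪y - p y, p x - p y⟫ := by
      field_simp
    linarith [e2 ▸ this]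
  rw [inner_sub_left]
  linarith

lemma DYaux.nonexp (u v pu pv : E) (h : 0 ≤ ⟪(u - pu) - (v - pv), pu - pv⟫) :
    ‖pu - pv‖ ≤ ‖u - v‖ := by
  have e : ⟪(u - pu) - (v - pv), pu - pv⟫ = ⟪u - v, pu - pv⟫ - ‖pu - pv‖^2 := by
    rw [show (u - pu) - (v - pv) = (u - v) - (pu - pv) by abel, inner_sub_left,
      real_inner_self_eq_norm_sq]
  rw [e] at h
  have h2 := real_inner_le_norm (u - v) (pu - pv)
  nlinarith [norm_nonneg (pu - pv), norm_nonneg (u - v)]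

lemma DYaux.prox_fixed (g : E → EReal) (hg_ne_bot : ∀ x, g x ≠ ⊥) (p : E → E)
    (hptop : ∀ x, g (p x) ≠ ⊤) (α : ℝ) (hα : 0 < α)
    (hp : ∀ x z : E, g (p x) + ((1 / (2 * α) * ‖p x - x‖ ^ 2 : ℝ) : EReal) ≤
        g z + ((1 / (2 * α) * ‖z - x‖ ^ 2 : ℝ) : EReal))
    (x₀ v : E) (hv : ∀ z, g x₀ + ((⟪v, z - x₀⟫ : ℝ) : EReal) ≤ g z) :
    p (x₀ + α • v) = x₀ := by
  set P := p (x₀ + α • v) with hPdef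
  have hx₀top : g x₀ ≠ ⊤ := by
    intro htop
    have := hv P
    rw [htop, EReal.top_add_coe] at this
    exact hptop _ (top_le_iff.mp this)
  obtain ⟨s0, hs0⟩ : ∃ s0 : ℝ, g x₀ = s0 :=
    ⟨(g x₀).toReal, (EReal.coe_toReal hx₀top (hg_ne_bot _)).symm⟩
  obtain ⟨sP, hsP⟩ : ∃ sP : ℝ, g P = sP :=
    ⟨(g P).toReal, (EReal.coe_toReal (hptop _) (hg_ne_bot _)).symm⟩
  have h1 := hp (x₀ + α • v) x₀
  have h2 := hv P
  rw [hsP, hs0, ← EReal.coe_add, ← EReal.coe_add, EReal.coe_le_coe_iff] at h1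
  rw [hs0, hsP, ← EReal.coe_add, EReal.coe_le_coe_iff] at h2
  have eA : ‖x₀ - (x₀ + α • v)‖^2 = α^2 * ‖v‖^2 := by
    rw [show x₀ - (x₀ + α • v) = -(α • v) by abel, norm_neg, norm_smul, mul_pow,
      Real.norm_eq_abs, sq_abs]
  have eB : ‖P - (x₀ + α • v)‖^2
      = ‖P - x₀‖^2 - 2 * (α * ⟪v, P - x₀⟫) + α^2 * ‖v‖^2 := by
    rw [show P - (x₀ + α • v) = (P - x₀) - α • v by abel, norm_sub_sq_real,
      real_inner_smul_right, norm_smul, mul_pow, Real.norm_eq_abs, sq_abs,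
      real_inner_comm]
  rw [eA, eB] at h1
  have e5 : 1/(2*α) * (2 * (α * ⟪v, P - x₀⟫)) = ⟪v, P - x₀⟫ := by field_simp
  have hsq : ‖P - x₀‖^2 ≤ 0 := by
    have hpos : (0:ℝ) < 1/(2*α) := by positivity
    nlinarith [h1, h2, e5]
  have : ‖P - x₀‖ = 0 := by nlinarith [norm_nonneg (P - x₀)]
  have := norm_eq_zero.mp this
  exact sub_eq_zero.mp this

end DYauxSec

section DYauxSec2

variable {E : Type*} [NormedAddCommGroup E] [InnerProductSpace ℝ E] [CompleteSpace E]

lemma DYaux.line_hasDerivAt (h : E → ℝ) (h' : E → E)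
    (hgrad : ∀ x, HasGradientAt h (h' x) x) (x y : E) (t : ℝ) :
    HasDerivAt (fun t : ℝ => h (x + t • (y - x))) ⟪h' (x + t • (y - x)), y - x⟫ t := by
  have hl : HasDerivAt (fun t : ℝ => x + t • (y - x)) (y - x) t := by
    simpa using ((hasDerivAt_id t).smul_const (y - x)).const_add x
  have hfd := (hgrad (x + t • (y - x))).hasFDerivAt
  have hc := hfd.comp_hasDerivAt t hl
  simp only [InnerProductSpace.toDual_apply_apply] at hc
  exact hc

lemma DYaux.grad_ineq (h : E → ℝ) (hconv : ConvexOn ℝ Set.univ h) (h' : E → E)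
    (hgrad : ∀ x, HasGradientAt h (h' x) x) (x y : E) :
    h x + ⟪h' x, y - x⟫ ≤ h y := by
  set φ : ℝ → ℝ := fun t => h (x + t • (y - x)) with hφ
  have hd : HasDerivAt φ ⟪h' x, y - x⟫ 0 := by
    simpa using DYaux.line_hasDerivAt h h' hgrad x y 0
  have hslope := hasDerivAt_iff_tendsto_slope.mp hd
  have hslope' : Tendsto (slope φ 0) (𝓝[>] 0) (𝓝 ⟪h' x, y - x⟫) :=
    hslope.mono_left (nhdsWithin_mono 0 (fun t ht => ne_of_gt ht))
  have hev : ∀ᶠ t in 𝓝[>] (0:ℝ), slope φ 0 t ≤ φ 1 - φ 0 := by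
    filter_upwards [Ioo_mem_nhdsGT_of_mem (Set.left_mem_Ico.mpr one_pos)] with t ht
    have hc := hconv.2 (Set.mem_univ x) (Set.mem_univ y) (by linarith [ht.2] : (0:ℝ) ≤ 1 - t)
      ht.1.le (by ring)
    have harg : (1 - t) • x + t • y = x + t • (y - x) := by
      rw [smul_sub, sub_smul, one_smul]; abel
    rw [harg] at hc
    have hφ1 : φ 1 = h y := by simp [hφ]
    have hφ0 : φ 0 = h x := by simp [hφ]
    rw [slope_def_field]
    rw [div_le_iff₀ (by simpa using ht.1)]
    simp only [sub_zero]
    have hct : φ t ≤ (1 - t) * h x + t * h y := hc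
    rw [hφ0, hφ1]
    nlinarith [hct]
  have hle := le_of_tendsto hslope' hev
  have hφ1 : φ 1 = h y := by simp [hφ]
  have hφ0 : φ 0 = h x := by simp [hφ]
  rw [hφ1, hφ0] at hle
  linarith

lemma DYaux.descent (h : E → ℝ) (h' : E → E)
    (hgrad : ∀ x, HasGradientAt h (h' x) x)
    (γ : ℝ) (hh_lip : ∀ x y, ‖h' x - h' y‖ ≤ γ * ‖x - y‖)
    (x y : E) : h y ≤ h x + ⟪h' x, y - x⟫ + γ / 2 * ‖y - x‖ ^ 2 := by
  have hconth' : Continuous h' := by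
    have : LipschitzWith (Real.toNNReal γ) h' := by
      apply LipschitzWith.of_dist_le_mul
      intro a b
      rw [dist_eq_norm, dist_eq_norm]
      calc ‖h' a - h' b‖ ≤ γ * ‖a - b‖ := hh_lip a b
        _ ≤ (Real.toNNReal γ) * ‖a - b‖ := by
            gcongr; exact le_max_left _ _
    exact this.continuous
  set φ' : ℝ → ℝ := fun t => ⟪h' (x + t • (y - x)), y - x⟫ with hφ'
  have hcont : Continuous φ' := by
    apply Continuous.inner
    · exact hconth'.comp (by continuity)
    · exact continuous_const
  have hInt : IntervalIntegrable φ' MeasureTheory.volume 0 1 :=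
    hcont.intervalIntegrable 0 1
  have hFTC : ∫ t in (0:ℝ)..1, φ' t = h (x + (1:ℝ) • (y - x)) - h (x + (0:ℝ) • (y - x)) :=
    integral_eq_sub_of_hasDerivAt (fun t _ => DYaux.line_hasDerivAt h h' hgrad x y t) hInt
  have hFTC' : ∫ t in (0:ℝ)..1, φ' t = h y - h x := by
    rw [hFTC]; norm_num
  have hbound : ∀ t ∈ Set.Icc (0:ℝ) 1, φ' t ≤ ⟪h' x, y - x⟫ + γ * ‖y - x‖^2 * t := by
    intro t ht
    have h1 : φ' t - ⟪h' x, y - x⟫ = ⟪h' (x + t • (y - x)) - h' x, y - x⟫ := by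
      rw [inner_sub_left]
    have h2 : ⟪h' (x + t • (y - x)) - h' x, y - x⟫ ≤ ‖h' (x + t • (y - x)) - h' x‖ * ‖y - x‖ :=
      real_inner_le_norm _ _
    have h3 : ‖h' (x + t • (y - x)) - h' x‖ ≤ γ * (t * ‖y - x‖) := by
      calc ‖h' (x + t • (y - x)) - h' x‖ ≤ γ * ‖x + t • (y - x) - x‖ := hh_lip _ _
        _ = γ * (t * ‖y - x‖) := by
            rw [add_sub_cancel_left, norm_smul, Real.norm_eq_abs, abs_of_nonneg ht.1]
    nlinarith [norm_nonneg (y - x), h2, h3, mul_le_mul_of_nonneg_right h3 (norm_nonneg (y - x))]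
  have hmono : ∫ t in (0:ℝ)..1, φ' t ≤ ∫ t in (0:ℝ)..1, (⟪h' x, y - x⟫ + γ * ‖y - x‖^2 * t) := by
    apply integral_mono_on zero_le_one hInt
    · exact (Continuous.intervalIntegrable (by continuity) 0 1)
    · exact hbound
  have hval : ∫ t in (0:ℝ)..1, (⟪h' x, y - x⟫ + γ * ‖y - x‖^2 * t)
      = ⟪h' x, y - x⟫ + γ * ‖y - x‖^2 / 2 := by
    have hig : IntervalIntegrable (fun t : ℝ => γ * ‖y - x‖^2 * t) MeasureTheory.volume 0 1 :=
      (continuous_const.mul continuous_id').intervalIntegrable 0 1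
    rw [integral_add intervalIntegrable_const hig, integral_const_mul, integral_id, integral_const]
    simp
    ring
  rw [hFTC'] at hmono
  rw [hval] at hmono
  linarith

lemma DYaux.coco (h : E → ℝ) (hconv : ConvexOn ℝ Set.univ h) (h' : E → E)
    (hgrad : ∀ x, HasGradientAt h (h' x) x)
    (γ : ℝ) (hγ : 0 < γ) (hh_lip : ∀ x y, ‖h' x - h' y‖ ≤ γ * ‖x - y‖)
    (x y : E) : (1/γ) * ‖h' x - h' y‖^2 ≤ ⟪h' x - h' y, x - y⟫ := by
  have main : ∀ a b : E, h a + ⟪h' a, b - a⟫ + (1/(2*γ)) * ‖h' b - h' a‖^2 ≤ h b := by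
    intro a b
    set H : E → ℝ := fun z => h z - ⟪h' a, z⟫ with hH
    set H' : E → E := fun z => h' z - h' a with hH'
    have hHgrad : ∀ z, HasGradientAt H (H' z) z := by
      intro z
      rw [hasGradientAt_iff_hasFDerivAt]
      have h1 := (hgrad z).hasFDerivAt
      have h2 : HasFDerivAt (fun w : E => (⟪h' a, w⟫ : ℝ)) (innerSL ℝ (h' a)) z :=
        (innerSL ℝ (h' a)).hasFDerivAt
      have h3 := h1.sub h2
      convert h3 using 1
      ext w
      simp [hH', inner_sub_left]
      · rfl
      · rfl
      · ext w
        simp [hH', inner_sub_left]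
    have hHlip : ∀ z w : E, ‖H' z - H' w‖ ≤ γ * ‖z - w‖ := by
      intro z w
      simpa [hH', sub_sub_sub_cancel_right] using hh_lip z w
    have hmin : ∀ z, H a ≤ H z := by
      intro z
      simp only [hH]
      have hsplit : ⟪h' a, z⟫ - ⟪h' a, a⟫ = ⟪h' a, z - a⟫ := by rw [inner_sub_right]
      have h4 := DYaux.grad_ineq h hconv h' hgrad a z
      rw [← hsplit] at h4
      linarith
    have hdesc := DYaux.descent H H' hHgrad γ hHlip b (b - γ⁻¹ • (H' b))
    have harg : b - γ⁻¹ • H' b - b = -(γ⁻¹ • H' b) := by abel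
    rw [harg] at hdesc
    have hiv : ⟪H' b, -(γ⁻¹ • H' b)⟫ = -(γ⁻¹ * ‖H' b‖^2) := by
      rw [inner_neg_right, real_inner_smul_right, real_inner_self_eq_norm_sq]
    have hnv : ‖-(γ⁻¹ • H' b)‖^2 = γ⁻¹^2 * ‖H' b‖^2 := by
      rw [norm_neg, norm_smul, Real.norm_eq_abs, mul_pow, sq_abs]
    rw [hiv, hnv] at hdesc
    have hq := le_trans (hmin (b - γ⁻¹ • (H' b))) hdesc
    have hexp : H a ≤ H b - (1/(2*γ)) * ‖H' b‖^2 := by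
      have hγ' : γ ≠ 0 := ne_of_gt hγ
      have he : γ / 2 * (γ⁻¹ ^ 2 * ‖H' b‖ ^ 2) = (1/(2*γ)) * ‖H' b‖^2 := by
        field_simp
      rw [he] at hq
      have he2 : γ⁻¹ * ‖H' b‖^2 = 2 * (1/(2*γ) * ‖H' b‖^2) := by field_simp
      linarith
    simp only [hH, hH'] at hexp
    have hsplit : ⟪h' a, b⟫ - ⟪h' a, a⟫ = ⟪h' a, b - a⟫ := by rw [inner_sub_right]
    linarith [hexp, hsplit.symm.le, hsplit.le]
  have h1 := main x y
  have h2 := main y x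
  have e1 : ⟪h' x, y - x⟫ + ⟪h' y, x - y⟫ = -⟪h' x - h' y, x - y⟫ := by
    rw [inner_sub_left]
    rw [show (y - x : E) = -(x - y) by abel, inner_neg_right]
    ring
  have e2 : ‖h' y - h' x‖ = ‖h' x - h' y‖ := by rw [← norm_neg]; congr 1; abel
  rw [e2] at h1
  have e3 : 2 * (1/(2*γ) * ‖h' x - h' y‖^2) = 1/γ * ‖h' x - h' y‖^2 := by field_simp
  linarith [h1, h2, e1, e3]

end DYauxSec2

section DYauxSec3

variable {E : Type*} [NormedAddCommGroup E] [InnerProductSpace ℝ E]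

lemma DYaux.scalar (α γ X Y Z na nb nc Ec : ℝ)
    (hα : 0 < α)
    (h1 : 0 ≤ X - nb) (h2 : 0 ≤ 2*Z - Y - α*Ec - nc)
    (hC : 0 ≤ Ec + γ/4*(nb - 2*Z + nc)) :
    na + (nb - 2*Z + nc) - 2*X + 2*Y ≤ na - (1 - α*γ/2)*(nb - 2*Z + nc) := by
  nlinarith [h1, h2, mul_nonneg hα.le hC]

lemma DYaux.keyineq (a b c e : E) (α γ : ℝ) (hα : 0 < α) (hγ : 0 < γ)
    (hi : 0 ≤ ⟪a - b, b⟫)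
    (hii : 0 ≤ ⟪(2:ℝ) • b - a - α • e - c, c⟫)
    (hiii : (1/γ) * ‖e‖^2 ≤ ⟪e, b⟫) :
    ‖a - b + c‖^2 ≤ ‖a‖^2 - (1 - α*γ/2) * ‖b - c‖^2 := by
  have e1 : ⟪a - b, b⟫ = ⟪a,b⟫ - ‖b‖^2 := by
    rw [inner_sub_left, real_inner_self_eq_norm_sq]
  have e2 : ⟪(2:ℝ) • b - a - α • e - c, c⟫
      = 2*⟪b,c⟫ - ⟪a,c⟫ - α*⟪e,c⟫ - ‖c‖^2 := by
    rw [inner_sub_left, inner_sub_left, inner_sub_left, real_inner_smul_left,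
      real_inner_smul_left, real_inner_self_eq_norm_sq]
  have e3 : ‖b - c‖^2 = ‖b‖^2 - 2*⟪b,c⟫ + ‖c‖^2 := by
    rw [norm_sub_sq_real]
  have e4 : ‖a - b + c‖^2 = ‖a‖^2 + (‖b‖^2 - 2*⟪b,c⟫ + ‖c‖^2) - 2*⟪a,b⟫ + 2*⟪a,c⟫ := by
    have h5 : a - b + c = a - (b - c) := by abel
    rw [h5, norm_sub_sq_real, inner_sub_right, e3]
    ring
  have hC : 0 ≤ ⟪e,c⟫ + γ/4 * (‖b‖^2 - 2*⟪b,c⟫ + ‖c‖^2) := by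
    have hyoung : (0:ℝ) ≤ ‖e - (γ/2) • (b - c)‖^2 := sq_nonneg _
    have hexp : ‖e - (γ/2) • (b - c)‖^2
        = ‖e‖^2 - γ*(⟪e,b⟫ - ⟪e,c⟫) + γ^2/4 * (‖b‖^2 - 2*⟪b,c⟫ + ‖c‖^2) := by
      rw [norm_sub_sq_real, real_inner_smul_right, inner_sub_right, norm_smul, mul_pow,
        Real.norm_eq_abs, sq_abs, e3]
      ring
    rw [hexp] at hyoung
    have hgiii : ‖e‖^2 ≤ γ * ⟪e,b⟫ := by
      have hm := mul_le_mul_of_nonneg_left hiii hγ.le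
      have hne : γ * (1/γ * ‖e‖^2) = ‖e‖^2 := by field_simp
      rw [hne] at hm
      linarith
    have h0 : γ * 0 ≤ γ * (⟪e,c⟫ + γ/4 * (‖b‖^2 - 2*⟪b,c⟫ + ‖c‖^2)) := by nlinarith
    exact le_of_mul_le_mul_left h0 hγ
  rw [e1] at hi
  rw [e2] at hii
  rw [e3, e4]
  exact DYaux.scalar α γ ⟪a,b⟫ ⟪a,c⟫ ⟪b,c⟫ (‖a‖^2) (‖b‖^2) (‖c‖^2) ⟪e,c⟫ hα hi hii hC

end DYauxSec3

noncomputable section DY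

theorem statement5 (d : ℕ)
    (f g : EuclideanSpace ℝ (Fin d) → EReal)
    -- f and g are proper (never −∞, somewhere finite)
    (hf_ne_bot : ∀ x, f x ≠ ⊥) (hf_proper : ∃ x, f x ≠ ⊤)
    (hg_ne_bot : ∀ x, g x ≠ ⊥) (hg_proper : ∃ x, g x ≠ ⊤)
    -- f and g are convex
    (hf_convex : ∀ x y : EuclideanSpace ℝ (Fin d), ∀ t : ℝ, 0 ≤ t → t ≤ 1 →
      f (t • x + (1 - t) • y) ≤ (t : EReal) * f x + ((1 - t : ℝ) : EReal) * f y)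
    (hg_convex : ∀ x y : EuclideanSpace ℝ (Fin d), ∀ t : ℝ, 0 ≤ t → t ≤ 1 →
      g (t • x + (1 - t) • y) ≤ (t : EReal) * g x + ((1 - t : ℝ) : EReal) * g y)
    -- f and g are lower semicontinuous
    (hf_lsc : LowerSemicontinuous f) (hg_lsc : LowerSemicontinuous g)
    -- h is convex and differentiable with γ-Lipschitz gradient h'
    (h : EuclideanSpace ℝ (Fin d) → ℝ)
    (hh_convex : ConvexOn ℝ Set.univ h)
    (h' : EuclideanSpace ℝ (Fin d) → EuclideanSpace ℝ (Fin d))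
    (hh_grad : ∀ x, HasGradientAt h (h' x) x)
    (γ : ℝ) (hγ : 0 < γ)
    (hh_lip : ∀ x y, ‖h' x - h' y‖ ≤ γ * ‖x - y‖)
    -- step size α ∈ (0, 2/γ)
    (α : ℝ) (hα0 : 0 < α) (hα2 : α < 2 / γ)
    -- proxf = prox_{αf} and proxg = prox_{αg}: minimizers of
    -- z ↦ φ(z) + (1/(2α))‖z − x‖²
    (proxf proxg : EuclideanSpace ℝ (Fin d) → EuclideanSpace ℝ (Fin d))
    (hproxf : ∀ x z : EuclideanSpace ℝ (Fin d),
      f (proxf x) + ((1 / (2 * α) * ‖proxf x - x‖ ^ 2 : ℝ) : EReal) ≤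
        f z + ((1 / (2 * α) * ‖z - x‖ ^ 2 : ℝ) : EReal))
    (hproxg : ∀ x z : EuclideanSpace ℝ (Fin d),
      g (proxg x) + ((1 / (2 * α) * ‖proxg x - x‖ ^ 2 : ℝ) : EReal) ≤
        g z + ((1 / (2 * α) * ‖z - x‖ ^ 2 : ℝ) : EReal))
    -- there exist x*, u ∈ ∂f(x*), v ∈ ∂g(x*) with u + v + ∇h(x*) = 0
    (xstar ustar vstar : EuclideanSpace ℝ (Fin d))
    (hustar : ∀ z, f xstar + ((⟪ustar, z - xstar⟫ : ℝ) : EReal) ≤ f z)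
    (hvstar : ∀ z, g xstar + ((⟪vstar, z - xstar⟫ : ℝ) : EReal) ≤ g z)
    (hzero : ustar + vstar + h' xstar = 0)
    -- the Davis–Yin iteration, started from an arbitrary initial point w_1
    (w : ℕ → EuclideanSpace ℝ (Fin d))
    (hw : ∀ k, w (k + 1) =
      w k - proxg (w k) +
        proxf ((2 : ℝ) • proxg (w k) - w k - α • h' (proxg (w k)))) :
    -- {w_k} converges to some w̄, and x̄ = prox_{αg}(w̄) satisfies
    -- 0 ∈ ∂f(x̄) + ∂g(x̄) + ∇h(x̄); in particular x̄ globally minimizes f + g + h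
    ∃ wbar : EuclideanSpace ℝ (Fin d),
      Tendsto w atTop (𝓝 wbar) ∧
      (∃ u v : EuclideanSpace ℝ (Fin d),
        (∀ z, f (proxg wbar) + ((⟪u, z - proxg wbar⟫ : ℝ) : EReal) ≤ f z) ∧
        (∀ z, g (proxg wbar) + ((⟪v, z - proxg wbar⟫ : ℝ) : EReal) ≤ g z) ∧
        u + v + h' (proxg wbar) = 0) ∧
      ∀ z, f (proxg wbar) + g (proxg wbar) + ((h (proxg wbar) : ℝ) : EReal) ≤
        f z + g z + ((h z : ℝ) : EReal) := by
  classical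
  have hαγ : α * γ < 2 := by
    have := (lt_div_iff₀ hγ).mp hα2
    linarith
  have hftop : ∀ x, f (proxf x) ≠ ⊤ := DYaux.prox_ne_top f hf_ne_bot hf_proper α proxf hproxf
  have hgtop : ∀ x, g (proxg x) ≠ ⊤ := DYaux.prox_ne_top g hg_ne_bot hg_proper α proxg hproxg
  have hfs : ∀ x z, f (proxf x) + ((⟪α⁻¹ • (x - proxf x), z - proxf x⟫ : ℝ) : EReal) ≤ f z :=
    DYaux.prox_subgrad f hf_ne_bot hf_convex α hα0 proxf hproxf hftop
  have hgs : ∀ x z, g (proxg x) + ((⟪α⁻¹ • (x - proxg x), z - proxg x⟫ : ℝ) : EReal) ≤ g z :=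
    DYaux.prox_subgrad g hg_ne_bot hg_convex α hα0 proxg hproxg hgtop
  have hfmono := DYaux.prox_mono f hf_ne_bot proxf hftop α hα0 hfs
  have hgmono := DYaux.prox_mono g hg_ne_bot proxg hgtop α hα0 hgs
  have hcoco := DYaux.coco h hh_convex h' hh_grad γ hγ hh_lip
  set T : EuclideanSpace ℝ (Fin d) → EuclideanSpace ℝ (Fin d) :=
    fun ω => ω - proxg ω + proxf ((2:ℝ) • proxg ω - ω - α • h' (proxg ω)) with hTdef
  have hwT : ∀ k, w (k+1) = T (w k) := by
    intro k; rw [hw k]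
  -- the key contraction inequality
  have hkey : ∀ ω ω', ‖T ω - T ω'‖^2 ≤
      ‖ω - ω'‖^2 - (1 - α*γ/2) * ‖(ω - T ω) - (ω' - T ω')‖^2 := by
    intro ω ω'
    set b := proxg ω - proxg ω' with hb
    set a := ω - ω' with ha
    set y1 := (2:ℝ) • proxg ω - ω - α • h' (proxg ω) with hy1
    set y2 := (2:ℝ) • proxg ω' - ω' - α • h' (proxg ω') with hy2
    set c := proxf y1 - proxf y2 with hc
    set e := h' (proxg ω) - h' (proxg ω') with he
    have hi : 0 ≤ ⟪a - b, b⟫ := by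
      have hm := hgmono ω ω'
      have heq : (ω - proxg ω) - (ω' - proxg ω') = a - b := by
        rw [ha, hb]; abel
      rwa [heq] at hm
    have hii : 0 ≤ ⟪(2:ℝ) • b - a - α • e - c, c⟫ := by
      have hm := hfmono y1 y2
      have heq : (y1 - proxf y1) - (y2 - proxf y2) = (2:ℝ) • b - a - α • e - c := by
        rw [hy1, hy2, hb, ha, hc, he]
        simp only [smul_sub]
        abel
      rwa [heq] at hm
    have hiii : (1/γ) * ‖e‖^2 ≤ ⟪e, b⟫ := hcoco (proxg ω) (proxg ω')
    have hmain := DYaux.keyineq a b c e α γ hα0 hγ hi hii hiii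
    have eT : T ω - T ω' = a - b + c := by
      simp only [hTdef, ha, hb, hc, hy1, hy2]
      abel
    have eR : (ω - T ω) - (ω' - T ω') = b - c := by
      simp only [hTdef, ha, hb, hc, hy1, hy2]
      abel
    rw [eT, eR]; exact hmain
  set κ : ℝ := 1 - α*γ/2 with hκdef
  have hκ : 0 < κ := by rw [hκdef]; linarith
  -- the fixed point coming from the optimality assumptions
  set wstar := xstar + α • vstar with hwstar
  have hpg_star : proxg wstar = xstar :=
    DYaux.prox_fixed g hg_ne_bot proxg hgtop α hα0 hproxg xstar vstar hvstar
  have hpf_star : proxf (xstar + α • ustar) = xstar :=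
    DYaux.prox_fixed f hf_ne_bot proxf hftop α hα0 hproxf xstar ustar hustar
  have hfixstar : T wstar = wstar := by
    have hargeq : (2:ℝ) • proxg wstar - wstar - α • h' (proxg wstar) = xstar + α • ustar := by
      rw [hpg_star, hwstar]
      have h5 : h' xstar = -(ustar + vstar) := by
        rw [eq_neg_iff_add_eq_zero, add_comm]
        exact hzero
      rw [h5, smul_neg, smul_add, two_smul]
      abel
    simp only [hTdef]
    rw [hargeq, hpg_star, hpf_star]
    abel
  -- Fejér-type descent along the iterates
  have hdesc : ∀ (z : EuclideanSpace ℝ (Fin d)), T z = z →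
      ∀ k, ‖w (k+1) - z‖^2 ≤ ‖w k - z‖^2 - κ * ‖w k - w (k+1)‖^2 := by
    intro z hz k
    have hk := hkey (w k) z
    rw [hz, ← hwT k] at hk
    simpa using hk
  have hstar_desc := hdesc wstar hfixstar
  have hanti : ∀ k, ‖w (k+1) - wstar‖^2 ≤ ‖w k - wstar‖^2 := fun k =>
    le_trans (hstar_desc k) (sub_le_self _ (mul_nonneg hκ.le (sq_nonneg _)))
  have hsum : ∀ n, ∑ i ∈ Finset.range n, κ * ‖w i - w (i+1)‖^2 ≤ ‖w 0 - wstar‖^2 := by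
    intro n
    have hin : ∀ m, ∑ i ∈ Finset.range m, κ * ‖w i - w (i+1)‖^2
        ≤ ‖w 0 - wstar‖^2 - ‖w m - wstar‖^2 := by
      intro m
      induction m with
      | zero => simp
      | succ n ih =>
          rw [Finset.sum_range_succ]
          have := hstar_desc n
          linarith
    linarith [hin n, sq_nonneg ‖w n - wstar‖]
  have hsummable : Summable (fun i => κ * ‖w i - w (i+1)‖^2) :=
    summable_of_sum_range_le (fun n => mul_nonneg hκ.le (sq_nonneg _)) hsum
  have hres2 : Tendsto (fun k => κ * ‖w k - w (k+1)‖^2) atTop (𝓝 0) :=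
    hsummable.tendsto_atTop_zero
  have hres1 : Tendsto (fun k => ‖w k - w (k+1)‖^2) atTop (𝓝 0) := by
    have hc := hres2.const_mul κ⁻¹
    rw [mul_zero] at hc
    have : (fun k => κ⁻¹ * (κ * ‖w k - w (k+1)‖^2)) = fun k => ‖w k - w (k+1)‖^2 := by
      funext k
      rw [← mul_assoc, inv_mul_cancel₀ (ne_of_gt hκ), one_mul]
    rwa [this] at hc
  have hres : Tendsto (fun k => ‖w k - w (k+1)‖) atTop (𝓝 0) := by
    have hs := (Real.continuous_sqrt.tendsto 0).comp hres1
    rw [Real.sqrt_zero] at hs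
    simp only [Function.comp_def] at hs
    have : (fun k => Real.sqrt (‖w k - w (k+1)‖^2)) = fun k => ‖w k - w (k+1)‖ := by
      funext k; exact Real.sqrt_sq (norm_nonneg _)
    rwa [this] at hs
  -- boundedness and a convergent subsequence
  have hbound : ∀ k, w k ∈ Metric.closedBall wstar ‖w 0 - wstar‖ := by
    intro k
    rw [Metric.mem_closedBall, dist_eq_norm]
    have h1 : ‖w k - wstar‖^2 ≤ ‖w 0 - wstar‖^2 := by
      induction k with
      | zero => exact le_refl _
      | succ n ih => exact le_trans (hanti n) ih
    nlinarith [norm_nonneg (w k - wstar), norm_nonneg (w 0 - wstar)]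
  obtain ⟨wbar, -, φ, hφmono, hφtend⟩ :=
    tendsto_subseq_of_bounded Metric.isBounded_closedBall hbound
  -- continuity of T
  have hcontpg : Continuous proxg := by
    have : LipschitzWith 1 proxg := by
      apply LipschitzWith.of_dist_le_mul
      intro x y
      rw [dist_eq_norm, dist_eq_norm, NNReal.coe_one, one_mul]
      exact DYaux.nonexp x y (proxg x) (proxg y) (hgmono x y)
    exact this.continuous
  have hcontpf : Continuous proxf := by
    have : LipschitzWith 1 proxf := by
      apply LipschitzWith.of_dist_le_mul
      intro x y
      rw [dist_eq_norm, dist_eq_norm, NNReal.coe_one, one_mul]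
      exact DYaux.nonexp x y (proxf x) (proxf y) (hfmono x y)
    exact this.continuous
  have hconth' : Continuous h' := by
    have : LipschitzWith (Real.toNNReal γ) h' := by
      apply LipschitzWith.of_dist_le_mul
      intro x y
      rw [dist_eq_norm, dist_eq_norm]
      calc ‖h' x - h' y‖ ≤ γ * ‖x - y‖ := hh_lip x y
        _ ≤ (Real.toNNReal γ) * ‖x - y‖ := by gcongr; exact le_max_left _ _
    exact this.continuous
  have hcontT : Continuous T := by
    apply Continuous.add
    · exact continuous_id.sub hcontpg
    · exact hcontpf.comp
        (((hcontpg.const_smul (2:ℝ)).sub continuous_id).sub ((hconth'.comp hcontpg).const_smul α))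
  -- the subsequential limit is a fixed point
  have hφat : Tendsto φ atTop atTop := hφmono.tendsto_atTop
  have h1 : Tendsto (fun k => w (φ k)) atTop (𝓝 wbar) := hφtend
  have h2 : Tendsto (fun k => T (w (φ k))) atTop (𝓝 (T wbar)) :=
    (hcontT.tendsto wbar).comp h1
  have h3 : Tendsto (fun k => w (φ k) - T (w (φ k))) atTop (𝓝 0) := by
    rw [tendsto_zero_iff_norm_tendsto_zero]
    have : (fun k => ‖w (φ k) - T (w (φ k))‖) = (fun k => ‖w k - w (k+1)‖) ∘ φ := by
      funext k
      simp only [Function.comp_apply, hwT (φ k)]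
    rw [this]
    exact hres.comp hφat
  have h4 : Tendsto (fun k => T (w (φ k))) atTop (𝓝 wbar) := by
    have := h1.sub h3
    rw [sub_zero] at this
    have heq : (fun k => w (φ k) - (w (φ k) - T (w (φ k)))) = fun k => T (w (φ k)) := by
      funext k; abel
    rwa [heq] at this
  have hfixbar : T wbar = wbar := tendsto_nhds_unique h2 h4
  -- full convergence via Fejér monotonicity w.r.t. wbar
  set A : ℕ → ℝ := fun k => ‖w k - wbar‖^2 with hA
  have hAanti : Antitone A := antitone_nat_of_succ_le (fun k =>
    le_trans (hdesc wbar hfixbar k) (sub_le_self _ (mul_nonneg hκ.le (sq_nonneg _))))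
  have hAbdd : BddBelow (Set.range A) := ⟨0, by rintro x ⟨k, rfl⟩; exact sq_nonneg _⟩
  have hAconv : Tendsto A atTop (𝓝 (⨅ i, A i)) := tendsto_atTop_ciInf hAanti hAbdd
  have hAsub : Tendsto (A ∘ φ) atTop (𝓝 (⨅ i, A i)) := hAconv.comp hφat
  have hAsub0 : Tendsto (A ∘ φ) atTop (𝓝 0) := by
    have h5 : Tendsto (fun k => w (φ k) - wbar) atTop (𝓝 0) := by
      have := h1.sub (tendsto_const_nhds (x := wbar))
      rwa [sub_self] at this
    have h6 := (h5.norm).pow 2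
    simp only [norm_zero] at h6
    have : (0:ℝ)^2 = 0 := by norm_num
    rw [this] at h6
    exact h6
  have hinf0 : (⨅ i, A i) = 0 := tendsto_nhds_unique hAsub hAsub0
  have hA0 : Tendsto A atTop (𝓝 0) := hinf0 ▸ hAconv
  have hwconv : Tendsto w atTop (𝓝 wbar) := by
    rw [tendsto_iff_dist_tendsto_zero]
    have hs := (Real.continuous_sqrt.tendsto 0).comp hA0
    rw [Real.sqrt_zero] at hs
    simp only [Function.comp_def] at hs
    have heq : (fun k => Real.sqrt (A k)) = fun k => dist (w k) wbar := by
      funext k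
      rw [hA, dist_eq_norm]
      exact Real.sqrt_sq (norm_nonneg _)
    rwa [heq] at hs
  -- optimality of the limit
  have hxb : proxf ((2:ℝ) • proxg wbar - wbar - α • h' (proxg wbar)) = proxg wbar := by
    have h6 := hfixbar
    simp only [hTdef] at h6
    have h7 : wbar - proxg wbar + proxf ((2:ℝ) • proxg wbar - wbar - α • h' (proxg wbar))
        = wbar - proxg wbar + proxg wbar := by
      rw [h6]; abel
    exact add_left_cancel h7
  set xb := proxg wbar with hxbdef
  set yb := (2:ℝ) • xb - wbar - α • h' xb with hybdef
  set u := α⁻¹ • (yb - xb) with hudef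
  set v := α⁻¹ • (wbar - xb) with hvdef
  have hufs : ∀ z, f xb + ((⟪u, z - xb⟫ : ℝ) : EReal) ≤ f z := by
    intro z
    have h8 := hfs yb z
    rw [hxb] at h8
    exact h8
  have hvgs : ∀ z, g xb + ((⟪v, z - xb⟫ : ℝ) : EReal) ≤ g z := fun z => hgs wbar z
  have huv : u + v + h' xb = 0 := by
    rw [hudef, hvdef, ← smul_add]
    have e7 : (yb - xb) + (wbar - xb) = -(α • h' xb) := by
      rw [hybdef, two_smul]; abel
    rw [e7, smul_neg, inv_smul_smul₀ (ne_of_gt hα0)]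
    abel
  have hfxbtop : f xb ≠ ⊤ := by rw [← hxb]; exact hftop yb
  have hgxbtop : g xb ≠ ⊤ := hgtop wbar
  obtain ⟨rf, hrf⟩ : ∃ r : ℝ, f xb = r :=
    ⟨(f xb).toReal, (EReal.coe_toReal hfxbtop (hf_ne_bot _)).symm⟩
  obtain ⟨rg, hrg⟩ : ∃ r : ℝ, g xb = r :=
    ⟨(g xb).toReal, (EReal.coe_toReal hgxbtop (hg_ne_bot _)).symm⟩
  refine ⟨wbar, hwconv, ⟨u, v, hufs, hvgs, huv⟩, ?_⟩
  intro z
  rcases eq_or_ne (f z) ⊤ with hfz | hfz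
  · rw [hfz, EReal.top_add_of_ne_bot (hg_ne_bot z), EReal.top_add_coe]
    exact le_top
  rcases eq_or_ne (g z) ⊤ with hgz | hgz
  · rw [hgz, EReal.add_top_of_ne_bot (hf_ne_bot z), EReal.top_add_coe]
    exact le_top
  obtain ⟨rfz, hrfz⟩ : ∃ r : ℝ, f z = r :=
    ⟨(f z).toReal, (EReal.coe_toReal hfz (hf_ne_bot z)).symm⟩
  obtain ⟨rgz, hrgz⟩ : ∃ r : ℝ, g z = r :=
    ⟨(g z).toReal, (EReal.coe_toReal hgz (hg_ne_bot z)).symm⟩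
  have h8 := hufs z
  have h9 := hvgs z
  rw [hrf, hrfz, ← EReal.coe_add, EReal.coe_le_coe_iff] at h8
  rw [hrg, hrgz, ← EReal.coe_add, EReal.coe_le_coe_iff] at h9
  have h10 := DYaux.grad_ineq h hh_convex h' hh_grad xb z
  have h11 : ⟪u, z - xb⟫ + ⟪v, z - xb⟫ + ⟪h' xb, z - xb⟫ = 0 := by
    rw [← inner_add_left, ← inner_add_left, huv, inner_zero_left]
  rw [hrf, hrg, hrfz, hrgz, ← EReal.coe_add, ← EReal.coe_add, ← EReal.coe_add, ← EReal.coe_add,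
    EReal.coe_le_coe_iff]
  linarith

end DY
end

section
/- (von Neumann alternating projections.) Let H be a real Hilbert space and let U and W be closed linear subspaces of H, with orthogonal projections P_U, P_W, and P_{U∩W} onto U, W, and U ∩ W respectively. Then for every x ∈ H, the sequence defined by x_0 = x and x_{k+1} = P_W(P_U(x_k)) converges in norm to P_{U∩W}(x). -/
/-!
STATEMENT 7: von Neumann's alternating projection theorem: for closed subspaces
U, W of a real Hilbert space H, the iterates x_{k+1} = P_W (P_U x_k) converge in
norm to P_{U∩W} x.
-/

open scoped RealInnerProductSpace
open Filter Topology

private def vnSeq {H : Type*} (PU PW : H → H) (x : H) : ℕ → H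
  | 0 => x
  | (n+1) => if Even n then PU (vnSeq PU PW x n) else PW (vnSeq PU PW x n)

theorem statement7 {H : Type*} [NormedAddCommGroup H] [InnerProductSpace ℝ H]
    [CompleteSpace H]
    (U W : Submodule ℝ H)
    (hU : IsClosed (U : Set H)) (hW : IsClosed (W : Set H))
    -- P_U, P_W, P_{U∩W} are the orthogonal projections onto U, W and U ∩ W
    (PU PW PUW : H → H)
    (hPU : ∀ x, PU x ∈ U ∧ ∀ u ∈ U, ⟪x - PU x, u⟫ = 0)
    (hPW : ∀ x, PW x ∈ W ∧ ∀ u ∈ W, ⟪x - PW x, u⟫ = 0)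
    (hPUW : ∀ x, PUW x ∈ U ⊓ W ∧ ∀ u ∈ U ⊓ W, ⟪x - PUW x, u⟫ = 0)
    (x : H) :
    -- x_0 = x, x_{k+1} = P_W (P_U x_k)  ⟹  x_k → P_{U∩W} x
    Tendsto (fun k => (fun y => PW (PU y))^[k] x) atTop (𝓝 (PUW x)) := by
  set z : ℕ → H := vnSeq PU PW x with hz
  have hz0 : z 0 = x := rfl
  have hzE : ∀ n, Even n → z (n+1) = PU (z n) := by
    intro n hn; simp [hz, vnSeq, hn]
  have hzO : ∀ n, ¬ Even n → z (n+1) = PW (z n) := by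
    intro n hn; simp [hz, vnSeq, hn]
  -- membership
  have memU : ∀ n, ¬ Even n → z n ∈ U := by
    intro n hn
    match n, hn with
    | m + 1, hn =>
      have hm : Even m := by simpa [Nat.even_add_one] using hn
      rw [hzE m hm]; exact (hPU (z m)).1
  have memW : ∀ n, 1 ≤ n → Even n → z n ∈ W := by
    intro n h1 hn
    obtain ⟨m, rfl⟩ : ∃ m, n = m + 1 := ⟨n - 1, by omega⟩
    have hm : ¬ Even m := by simpa [Nat.even_add_one] using hn
    rw [hzO m hm]; exact (hPW (z m)).1
  -- orthogonality
  have orthU : ∀ n, Even n → ∀ u ∈ U, ⟪z n - z (n+1), u⟫ = 0 := by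
    intro n hn u hu; rw [hzE n hn]; exact (hPU (z n)).2 u hu
  have orthW : ∀ n, ¬ Even n → ∀ u ∈ W, ⟪z n - z (n+1), u⟫ = 0 := by
    intro n hn u hu; rw [hzO n hn]; exact (hPW (z n)).2 u hu
  -- pythagoras
  have pyth : ∀ n, ‖z n‖^2 = ‖z n - z (n+1)‖^2 + ‖z (n+1)‖^2 := by
    intro n
    have horth : ⟪z n - z (n+1), z (n+1)⟫ = 0 := by
      by_cases hn : Even n
      · exact orthU n hn _ (memU (n+1) (by simpa [Nat.even_add_one] using hn))
      · exact orthW n hn _ (memW (n+1) (by omega) (by simpa [Nat.even_add_one] using hn))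
    have := norm_add_sq_eq_norm_sq_add_norm_sq_of_inner_eq_zero (𝕜 := ℝ) _ _ horth
    simp only [sub_add_cancel] at this
    nlinarith [this]
  have par : ∀ a b : ℕ, Even (a + 2*b) ↔ Even a := by
    intro a b; simp only [Nat.even_iff]; omega
  -- key inner product identity
  have key : ∀ d k, 1 ≤ k → ⟪z k, z (k + 2*d)⟫ = ‖z (k+d)‖^2 := by
    intro d
    induction d with
    | zero => intro k hk; simp [real_inner_self_eq_norm_sq]
    | succ d ih =>
      intro k hk
      have step1 : ⟪z k, z (k + 2*(d+1))⟫ = ⟪z k, z (k + 2*d + 1)⟫ := by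
        have e : k + 2*(d+1) = (k + 2*d + 1) + 1 := by ring
        rw [e]
        have h0 : ⟪z (k+2*d+1) - z (k+2*d+1+1), z k⟫ = 0 := by
          by_cases h : Even k
          · apply orthW _ _ _ (memW k hk h)
            simp only [Nat.even_iff] at h ⊢; omega
          · apply orthU _ _ _ (memU k h)
            simp only [Nat.even_iff] at h ⊢; omega
        have h0' : ⟪z k, z (k+2*d+1) - z (k+2*d+1+1)⟫ = 0 := by
          rw [real_inner_comm]; exact h0
        simp only [inner_sub_right] at h0'
        linarith
      have step2 : ⟪z k, z (k + 2*d + 1)⟫ = ⟪z (k+1), z (k + 2*d + 1)⟫ := by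
        have h0 : ⟪z k - z (k+1), z (k+2*d+1)⟫ = 0 := by
          by_cases h : Even k
          · apply orthU _ h _ (memU (k+2*d+1) ?_)
            simp only [Nat.even_iff] at h ⊢; omega
          · apply orthW _ h _ (memW (k+2*d+1) (by omega) ?_)
            simp only [Nat.even_iff] at h ⊢; omega
        simp only [inner_sub_left] at h0
        linarith
      have e1 : k + 2*d + 1 = (k+1) + 2*d := by ring
      have e2 : (k+1) + d = k + (d+1) := by ring
      rw [step1, step2, e1, ih (k+1) (by omega), e2]
  -- the sequence of squared norms
  set a : ℕ → ℝ := fun n => ‖z n‖^2 with ha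
  have adec : Antitone a := by
    apply antitone_nat_of_succ_le
    intro n
    have := pyth n
    show ‖z (n+1)‖^2 ≤ ‖z n‖^2
    nlinarith [sq_nonneg ‖z n - z (n+1)‖]
  have abdd : BddBelow (Set.range a) :=
    ⟨0, by rintro _ ⟨n, rfl⟩; positivity⟩
  set α : ℝ := ⨅ n, a n with hα
  have haten : Tendsto a atTop (𝓝 α) := tendsto_atTop_ciInf adec abdd
  have hαle : ∀ n, α ≤ a n := fun n => ciInf_le abdd n
  -- same-parity distance bound
  have same : ∀ k d, 1 ≤ k → ‖z k - z (k+2*d)‖ ≤ Real.sqrt (a k - α) := by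
    intro k d hk
    have h1 : ‖z k - z (k+2*d)‖^2 = a k - 2 * a (k+d) + a (k+2*d) := by
      rw [norm_sub_sq_real, key d k hk]
    have h2 : a (k+2*d) ≤ a (k+d) := adec (show k+d ≤ k+2*d by omega)
    have h3 : ‖z k - z (k+2*d)‖^2 ≤ a k - α := by
      have := hαle (k+2*d); linarith
    calc ‖z k - z (k+2*d)‖ = Real.sqrt (‖z k - z (k+2*d)‖^2) := by
          rw [Real.sqrt_sq (norm_nonneg _)]
      _ ≤ Real.sqrt (a k - α) := Real.sqrt_le_sqrt h3
  -- general distance bound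
  have bnd : ∀ k l, 1 ≤ k → k ≤ l → ‖z k - z l‖ ≤ 2 * Real.sqrt (a k - α) := by
    intro k l hk hkl
    have hs : 0 ≤ Real.sqrt (a k - α) := Real.sqrt_nonneg _
    by_cases hp : Even (l - k)
    · obtain ⟨d, hd⟩ := hp
      have : l = k + 2*d := by omega
      rw [this]
      have := same k d hk
      linarith
    · have hl : k + 1 ≤ l := by
        rcases Nat.eq_or_lt_of_le hkl with h | h
        · exact absurd (h ▸ by simp) hp
        · omega
      obtain ⟨d, hd⟩ : ∃ d, l - 1 - k = 2*d := by
        simp only [Nat.even_iff] at hp; exact ⟨(l-1-k)/2, by omega⟩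
      have hl1 : l - 1 = k + 2*d := by omega
      have hll : l = (l-1) + 1 := by omega
      have t1 : ‖z k - z (l-1)‖ ≤ Real.sqrt (a k - α) := by
        rw [hl1]; exact same k d hk
      have t2 : ‖z (l-1) - z l‖ ≤ Real.sqrt (a k - α) := by
        have hpyth := pyth (l-1)
        have h2 : ‖z (l-1) - z l‖^2 ≤ a k - α := by
          have h3 : a (l-1) ≤ a k := adec (by omega)
          have h4 : α ≤ a l := hαle l
          have h5 : a (l-1) = ‖z (l-1) - z ((l-1)+1)‖^2 + a ((l-1)+1) := hpyth
          rw [← hll] at h5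
          linarith
        calc ‖z (l-1) - z l‖ = Real.sqrt (‖z (l-1) - z l‖^2) := by
              rw [Real.sqrt_sq (norm_nonneg _)]
          _ ≤ Real.sqrt (a k - α) := Real.sqrt_le_sqrt h2
      calc ‖z k - z l‖ ≤ ‖z k - z (l-1)‖ + ‖z (l-1) - z l‖ := by
            have : z k - z l = (z k - z (l-1)) + (z (l-1) - z l) := by abel
            rw [this]; exact norm_add_le _ _
        _ ≤ 2 * Real.sqrt (a k - α) := by linarith
  -- Cauchy sequence
  have hcauchy : CauchySeq (fun n => z (n+1)) := by
    apply cauchySeq_of_le_tendsto_0 (fun N => 2 * Real.sqrt (a (N+1) - α))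
    · intro n m N hn hm
      wlog hnm : n ≤ m generalizing n m
      · rw [dist_comm]; exact this m n hm hn (by omega)
      rw [dist_eq_norm]
      calc ‖z (n+1) - z (m+1)‖ ≤ 2 * Real.sqrt (a (n+1) - α) :=
            bnd (n+1) (m+1) (by omega) (by omega)
        _ ≤ 2 * Real.sqrt (a (N+1) - α) := by
            have h1 : a (n+1) ≤ a (N+1) := adec (by omega)
            have h2 := hαle (n+1)
            have := Real.sqrt_le_sqrt (show a (n+1) - α ≤ a (N+1) - α by linarith)
            linarith
    · have h1 : Tendsto (fun N => a (N+1) - α) atTop (𝓝 0) := by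
        have := (haten.comp (tendsto_add_atTop_nat 1)).sub
          (tendsto_const_nhds (x := α))
        simpa using this
      have h2 : Tendsto (fun N => Real.sqrt (a (N+1) - α)) atTop (𝓝 0) := by
        have := (Real.continuous_sqrt.tendsto 0).comp h1
        simpa [Function.comp_def] using this
      have := h2.const_mul 2
      simpa using this
  obtain ⟨w, hw⟩ := cauchySeq_tendsto_of_complete hcauchy
  have hzt : Tendsto z atTop (𝓝 w) := by
    rw [← tendsto_add_atTop_iff_nat 1]; exact hw
  -- w ∈ U ⊓ W
  have hwU : w ∈ U := by
    have h2 : Tendsto (fun n : ℕ => 2*n+1) atTop atTop :=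
      tendsto_atTop_atTop_of_monotone (fun a b h => by omega) (fun b => ⟨b, by omega⟩)
    exact hU.mem_of_tendsto (hzt.comp h2)
      (Filter.Eventually.of_forall fun n => by exact memU (2*n+1) (by simp only [Nat.even_iff]; omega))
  have hwW : w ∈ W := by
    have h2 : Tendsto (fun n : ℕ => 2*n+2) atTop atTop :=
      tendsto_atTop_atTop_of_monotone (fun a b h => by omega) (fun b => ⟨b, by omega⟩)
    exact hW.mem_of_tendsto (hzt.comp h2)
      (Filter.Eventually.of_forall fun n => by exact memW (2*n+2) (by omega) (by simp only [Nat.even_iff]; omega))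
  -- orthogonality of x - w to U ⊓ W
  have horthn : ∀ n, ∀ u ∈ U ⊓ W, ⟪x - z n, u⟫ = 0 := by
    intro n u hu
    obtain ⟨huU, huW⟩ := Submodule.mem_inf.mp hu
    induction n with
    | zero => simp [hz0]
    | succ n ih =>
      have e : x - z (n+1) = (x - z n) + (z n - z (n+1)) := by abel
      rw [e, inner_add_left, ih]
      by_cases h : Even n
      · rw [orthU n h u huU]; ring
      · rw [orthW n h u huW]; ring
  have horthw : ∀ u ∈ U ⊓ W, ⟪x - w, u⟫ = 0 := by
    intro u hu
    have hten : Tendsto (fun n => ⟪x - z n, u⟫) atTop (𝓝 ⟪x - w, u⟫) :=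
      (tendsto_const_nhds.sub hzt).inner tendsto_const_nhds
    have : Tendsto (fun _ : ℕ => (0:ℝ)) atTop (𝓝 ⟪x - w, u⟫) := by
      simpa [fun n => horthn n u hu] using hten
    exact (tendsto_nhds_unique tendsto_const_nhds this).symm
  -- w = PUW x
  have hweq : w = PUW x := by
    obtain ⟨hp1, hp2⟩ := hPUW x
    have hwmem : w ∈ U ⊓ W := Submodule.mem_inf.mpr ⟨hwU, hwW⟩
    have hd : w - PUW x ∈ U ⊓ W := sub_mem hwmem hp1
    have h0 : ⟪w - PUW x, w - PUW x⟫ = 0 := by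
      have e : (⟪w - PUW x, w - PUW x⟫:ℝ)
          = ⟪x - PUW x, w - PUW x⟫ - ⟪x - w, w - PUW x⟫ := by
        rw [← inner_sub_left]; congr 1; abel
      rw [e, hp2 _ hd, horthw _ hd, sub_zero]
    have := inner_self_eq_zero.mp h0
    rwa [sub_eq_zero] at this
  -- iterate identification
  have iter : ∀ k, (fun y => PW (PU y))^[k] x = z (2*k) := by
    intro k
    induction k with
    | zero => simp [hz0]
    | succ k ih =>
      rw [Function.iterate_succ_apply', ih]
      have e1 : 2*(k+1) = (2*k+1) + 1 := by ring
      rw [e1, hzO (2*k+1) (by simp only [Nat.even_iff]; omega),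
        hzE (2*k) (by simp only [Nat.even_iff]; omega)]
  have h2 : Tendsto (fun k : ℕ => 2*k) atTop atTop :=
    tendsto_atTop_atTop_of_monotone (fun a b h => by omega) (fun b => ⟨b, by omega⟩)
  rw [← hweq]
  simpa [iter, Function.comp_def] using hzt.comp h2
end

section
/- (Convergence of cyclic projections onto convex sets.) Let C_1, …, C_s be closed convex subsets of ℝ^d with nonempty intersection C = C_1 ∩ ⋯ ∩ C_s. Then for every initial point x_1 ∈ ℝ^d, the cyclic projection sequence x_{k+1} = P_{C_s}( P_{C_{s−1}}( ⋯ P_{C_1}(x_k) ⋯ ) ) converges to some point belonging to C. -/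
/-!
STATEMENT 8: Convergence of cyclic (alternating) projections onto finitely many
closed convex subsets of ℝ^d with nonempty intersection: the cyclic projection
sequence converges to a point of the intersection.
-/

open Filter Topology

open RealInnerProductSpace in
lemma proj_ineq {E : Type*} [NormedAddCommGroup E] [InnerProductSpace ℝ E]
    {K : Set E} (hK : Convex ℝ K) {x p c : E} (hp : p ∈ K) (hc : c ∈ K)
    (hmin : ∀ y ∈ K, dist x p ≤ dist x y) :
    ‖p - c‖ ^ 2 + ‖x - p‖ ^ 2 ≤ ‖x - c‖ ^ 2 := by
  have hne : Nonempty K := ⟨⟨p, hp⟩⟩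
  have hinf : ‖x - p‖ = ⨅ w : K, ‖x - w‖ := by
    refine le_antisymm (le_ciInf fun w => ?_) (ciInf_le (f := fun w : K => ‖x - w‖) ⟨0, ?_⟩ ⟨p, hp⟩)
    · simpa [dist_eq_norm] using hmin w w.2
    · rintro a ⟨w, rfl⟩; positivity
  have hione := (norm_eq_iInf_iff_real_inner_le_zero hK hp).mp hinf c hc
  have expand := norm_add_sq_real (x - p) (p - c)
  rw [sub_add_sub_cancel] at expand
  have hneg : ⟪x - p, p - c⟫ = -⟪x - p, c - p⟫ := by
    rw [← inner_neg_right]; congr 1; abel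
  nlinarith [expand, hione]

lemma sq_norm_tendsto {α E : Type*} [NormedAddCommGroup E] {f : α → E} {l : Filter α}
    (h : Tendsto (fun a => ‖f a‖ ^ 2) l (𝓝 0)) : Tendsto f l (𝓝 0) := by
  rw [tendsto_zero_iff_norm_tendsto_zero]
  have := (Real.continuous_sqrt.tendsto 0).comp h
  simpa [Function.comp_def, Real.sqrt_sq, norm_nonneg] using this

theorem statement8 (d s : ℕ) (hs : 0 < s)
    (C : Fin s → Set (EuclideanSpace ℝ (Fin d)))
    (hC_closed : ∀ i, IsClosed (C i))
    (hC_convex : ∀ i, Convex ℝ (C i))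
    (hC_nonempty : ∀ i, (C i).Nonempty)
    -- the intersection C = C_1 ∩ ⋯ ∩ C_s is nonempty
    (hint : (⋂ i, C i).Nonempty)
    -- P i is the Euclidean (metric) projection onto C i
    (P : Fin s → EuclideanSpace ℝ (Fin d) → EuclideanSpace ℝ (Fin d))
    (hP : ∀ i x, P i x ∈ C i ∧ ∀ y ∈ C i, dist x (P i x) ≤ dist x y)
    -- the cyclic projection sequence: x_{k+1} = P_{C_s}(P_{C_{s−1}}(⋯ P_{C_1}(x_k) ⋯))
    (x : ℕ → EuclideanSpace ℝ (Fin d))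
    (hx : ∀ k, x (k + 1) = (List.finRange s).foldl (fun y i => P i y) (x k)) :
    -- {x_k} converges to some point of the intersection
    ∃ xbar ∈ ⋂ i, C i, Tendsto x atTop (𝓝 xbar) := by
  let T : ℕ → EuclideanSpace ℝ (Fin d) → EuclideanSpace ℝ (Fin d) :=
    fun j y => ((List.finRange s).take j).foldl (fun y i => P i y) y
  have hT0 : ∀ y, T 0 y = y := fun y => rfl
  have hTsucc : ∀ j (h : j < s) y, T (j + 1) y = P ⟨j, h⟩ (T j y) := by
    intro j h y
    show ((List.finRange s).take (j+1)).foldl (fun y i => P i y) y = _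
    rw [List.take_succ, List.getElem?_eq_getElem (by simpa using h)]
    simp [List.foldl_append]
    rfl
  have hTstab : ∀ j, s ≤ j → ∀ y, T (j + 1) y = T j y := by
    intro j h y
    show ((List.finRange s).take (j+1)).foldl (fun y i => P i y) y
      = ((List.finRange s).take j).foldl (fun y i => P i y) y
    rw [List.take_of_length_le (by simp; omega),
      List.take_of_length_le (by simpa using h)]
  have hxT : ∀ k, x (k + 1) = T s (x k) := by
    intro k
    rw [hx k]
    show _ = ((List.finRange s).take s).foldl (fun y i => P i y) (x k)
    rw [List.take_of_length_le (by simp)]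
  -- key inequality, for any c in the intersection
  have key : ∀ c ∈ ⋂ i, C i, ∀ j y,
      ‖T (j + 1) y - c‖ ^ 2 + ‖T j y - T (j + 1) y‖ ^ 2 ≤ ‖T j y - c‖ ^ 2 := by
    intro c hc j y
    rcases lt_or_ge j s with h | h
    · rw [hTsucc j h y]
      exact proj_ineq (hC_convex ⟨j, h⟩) (hP ⟨j, h⟩ (T j y)).1
        (Set.mem_iInter.mp hc ⟨j, h⟩) (hP ⟨j, h⟩ (T j y)).2
    · rw [hTstab j h y]; simp
  have hanti : ∀ c ∈ ⋂ i, C i, ∀ y j j', j ≤ j' →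
      ‖T j' y - c‖ ^ 2 ≤ ‖T j y - c‖ ^ 2 := by
    intro c hc y
    have : Antitone fun j => ‖T j y - c‖ ^ 2 := by
      refine antitone_nat_of_succ_le fun j => ?_
      have := key c hc j y
      nlinarith [sq_nonneg ‖T j y - T (j + 1) y‖]
    exact fun j j' h => this h
  have hseq_anti : ∀ c ∈ ⋂ i, C i, ∀ k k', k ≤ k' →
      ‖x k' - c‖ ^ 2 ≤ ‖x k - c‖ ^ 2 := by
    intro c hc
    have : Antitone fun k => ‖x k - c‖ ^ 2 := by
      refine antitone_nat_of_succ_le fun k => ?_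
      have h := hanti c hc (x k) 0 s (Nat.zero_le s)
      rw [hT0] at h
      rw [hxT k]; exact h
    exact fun k k' h => this h
  -- pick a base point
  obtain ⟨c, hcmem⟩ := hint
  have hDanti : Antitone fun k => ‖x k - c‖ ^ 2 := fun k k' h => hseq_anti c hcmem k k' h
  have hDbdd : BddBelow (Set.range fun k => ‖x k - c‖ ^ 2) :=
    ⟨0, by rintro a ⟨k, rfl⟩; positivity⟩
  set L := ⨅ k, ‖x k - c‖ ^ 2 with hLdef
  have hDL : Tendsto (fun k => ‖x k - c‖ ^ 2) atTop (𝓝 L) := tendsto_atTop_ciInf hDanti hDbdd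
  have hDL1 : Tendsto (fun k => ‖x (k + 1) - c‖ ^ 2) atTop (𝓝 L) :=
    hDL.comp (tendsto_add_atTop_nat 1)
  -- step sizes tend to 0
  have hstep : ∀ j < s, Tendsto (fun k => T j (x k) - T (j + 1) (x k)) atTop (𝓝 0) := by
    intro j hj
    apply sq_norm_tendsto
    have hsq : Tendsto (fun k => ‖x k - c‖ ^ 2 - ‖x (k + 1) - c‖ ^ 2) atTop (𝓝 0) := by
      simpa using hDL.sub hDL1
    refine tendsto_of_tendsto_of_tendsto_of_le_of_le tendsto_const_nhds hsq
      (fun k => by positivity) fun k => ?_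
    have h1 := key c hcmem j (x k)
    have h2 : ‖T j (x k) - c‖ ^ 2 ≤ ‖x k - c‖ ^ 2 := by
      have h := hanti c hcmem (x k) 0 j (Nat.zero_le j)
      rwa [hT0] at h
    have h3 : ‖x (k + 1) - c‖ ^ 2 ≤ ‖T (j + 1) (x k) - c‖ ^ 2 := by
      rw [hxT k]
      exact hanti c hcmem (x k) (j + 1) s (Nat.succ_le_of_lt hj)
    linarith
  -- cumulative distances tend to 0
  have hcum : ∀ j, j ≤ s → Tendsto (fun k => x k - T j (x k)) atTop (𝓝 0) := by
    intro j
    induction j with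
    | zero => intro _; simp [hT0]
    | succ j ih =>
      intro hj
      have h1 := ih (Nat.le_of_succ_le hj)
      have h2 := hstep j (Nat.lt_of_succ_le hj)
      have heq : (fun k => x k - T (j + 1) (x k)) =
          fun k => (x k - T j (x k)) + (T j (x k) - T (j + 1) (x k)) := by
        funext k; abel
      rw [heq]
      simpa using h1.add h2
  -- boundedness and a convergent subsequence
  have hball : ∀ k, x k ∈ Metric.closedBall c (dist (x 0) c) := by
    intro k
    have h2 : ‖x k - c‖ ^ 2 ≤ ‖x 0 - c‖ ^ 2 := hseq_anti c hcmem 0 k (Nat.zero_le k)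
    simp only [Metric.mem_closedBall, dist_eq_norm]
    nlinarith [norm_nonneg (x k - c), norm_nonneg (x 0 - c)]
  obtain ⟨z, -, φ, hφ, hzφ⟩ := tendsto_subseq_of_bounded Metric.isBounded_closedBall hball
  -- z belongs to the intersection
  have hzmem : z ∈ ⋂ i, C i := by
    refine Set.mem_iInter.mpr fun i => ?_
    have hi : (i : ℕ) < s := i.2
    have hone : Tendsto (fun n => T ((i : ℕ) + 1) (x (φ n))) atTop (𝓝 z) := by
      have hc1 := (hcum ((i : ℕ) + 1) (Nat.succ_le_of_lt hi)).comp hφ.tendsto_atTop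
      have heq : (fun n => T ((i : ℕ) + 1) (x (φ n))) =
          fun n => x (φ n) - (x (φ n) - T ((i : ℕ) + 1) (x (φ n))) := by
        funext n; abel
      rw [heq]
      simpa [Function.comp_def] using hzφ.sub hc1
    refine (hC_closed i).mem_of_tendsto hone (Eventually.of_forall fun n => ?_)
    have hm := (hP ⟨(i : ℕ), hi⟩ (T (i : ℕ) (x (φ n)))).1
    rw [← hTsucc (i : ℕ) hi (x (φ n))] at hm
    simpa using hm
  -- Fejér monotonicity w.r.t. z gives convergence
  refine ⟨z, hzmem, ?_⟩
  have hD'anti : Antitone fun k => ‖x k - z‖ ^ 2 := fun k k' h => hseq_anti z hzmem k k' h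
  have hD'bdd : BddBelow (Set.range fun k => ‖x k - z‖ ^ 2) :=
    ⟨0, by rintro a ⟨k, rfl⟩; positivity⟩
  have hD'L : Tendsto (fun k => ‖x k - z‖ ^ 2) atTop (𝓝 (⨅ k, ‖x k - z‖ ^ 2)) :=
    tendsto_atTop_ciInf hD'anti hD'bdd
  have hsub : Tendsto (fun n => ‖x (φ n) - z‖ ^ 2) atTop (𝓝 0) := by
    have h : Tendsto (fun n => ‖x (φ n) - z‖ ^ 2) atTop (𝓝 (‖z - z‖ ^ 2)) :=
      (((continuous_norm.comp (continuous_id.sub continuous_const)).pow 2).continuousAt.tendsto).comp hzφ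
    simpa using h
  have hL0 : (⨅ k, ‖x k - z‖ ^ 2) = 0 :=
    tendsto_nhds_unique (hD'L.comp hφ.tendsto_atTop) hsub
  rw [hL0] at hD'L
  have hz0 : Tendsto (fun k => x k - z) atTop (𝓝 0) := sq_norm_tendsto hD'L
  have := hz0.add (tendsto_const_nhds (x := z))
  rw [zero_add] at this
  exact this.congr fun k => by abel
end

section
/- (Boyle–Dykstra theorem.) Let H be a real Hilbert space and C_1, …, C_s closed convex subsets with nonempty intersection C = C_1 ∩ ⋯ ∩ C_s. Given x ∈ H, define Dykstra's algorithm by: x_0^{(s)} = x and q_0^{(i)} = 0 for i = 1,…,s; and for each cycle n ≥ 1, set x_n^{(0)} = x_{n−1}^{(s)} and, for i = 1,…,s, x_n^{(i)} = P_{C_i}( x_n^{(i−1)} + q_{n−1}^{(i)} ) and q_n^{(i)} = x_n^{(i−1)} + q_{n−1}^{(i)} − x_n^{(i)}. Then for each i ∈ {1,…,s}, the sequence x_n^{(i)} converges in norm, as n → ∞, to P_C(x), the point of C nearest to x. -/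
/-!
STATEMENT 9: The Boyle–Dykstra theorem: each sequence of iterates of Dykstra's
algorithm for closed convex sets C_1, …, C_s with nonempty intersection C
converges in norm to P_C x, the nearest point of C to x.
The sets and projections are indexed by i ∈ {1, …, s} ⊆ ℕ.
-/

open Filter Topology Finset TopologicalSpace

local notation "⟪" x ", " y "⟫" => @inner ℝ _ _ x y

namespace BD9

theorem sumIoc {M : Type*} [AddCommMonoid M] (f : ℤ → M) (a b c : ℤ) (h1 : a ≤ b) (h2 : b ≤ c) :
    (∑ i ∈ Ioc a b, f i) + (∑ i ∈ Ioc b c, f i) = ∑ i ∈ Ioc a c, f i := by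
  rw [← Finset.sum_union]
  · rw [Finset.Ioc_union_Ioc_eq_Ioc h1 h2]
  · simp only [Finset.disjoint_left, Finset.mem_Ioc]
    intro x hx hx2; omega

theorem IocSingle (b : ℤ) : Ioc b (b+1) = {b+1} := by
  ext k; simp only [Finset.mem_Ioc, Finset.mem_singleton]; omega

theorem sumIocTop {M : Type*} [AddCommMonoid M] (f : ℤ → M) (a b : ℤ) (h1 : a ≤ b) :
    (∑ i ∈ Ioc a (b+1), f i) = (∑ i ∈ Ioc a b, f i) + f (b+1) := by
  rw [← sumIoc f a b (b+1) h1 (by omega), IocSingle, Finset.sum_singleton]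

/-- phase of flattened index `k ≥ 1`: an element of `{1, …, s}`. -/
def ph (s : ℕ) (k : ℤ) : ℕ := ((k - 1).toNat % s) + 1

theorem bd_small_freq (v : ℕ → ℝ) (hv : ∀ n, 0 ≤ v n) (B : ℝ)
    (hB : ∀ N, ∑ m ∈ range N, v m ≤ B) :
    ∃ φ : ℕ → ℕ, StrictMono φ ∧ Tendsto (fun j => (φ j : ℝ) * v (φ j)) atTop (𝓝 0) := by
  have freq : ∀ j : ℕ, ∃ᶠ k : ℕ in atTop, (k : ℝ) * v k < 1 / ((j : ℝ) + 1) := by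
    intro j
    by_contra hc
    rw [Filter.not_frequently] at hc
    rw [Filter.eventually_atTop] at hc
    obtain ⟨N, hN⟩ := hc
    set N1 := max N 1 with hN1
    have hterm : ∀ M, ∀ i ∈ Finset.Ico N1 M, 1 / ((i : ℝ) + 1) ≤ ((j : ℝ) + 1) * v i := by
      intro M i hi
      rw [Finset.mem_Ico] at hi
      have hiN : N ≤ i := le_trans (le_max_left _ _) hi.1
      have hi1 : 1 ≤ i := le_trans (le_max_right _ _) hi.1
      have h1 := hN i hiN
      rw [not_lt] at h1
      have hi1' : (1 : ℝ) ≤ (i : ℝ) := by exact_mod_cast hi1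
      have hvi := hv i
      rw [div_le_iff₀ (by positivity)]
      have hj1 : (0 : ℝ) < (j : ℝ) + 1 := by positivity
      have h2 : (1 : ℝ) ≤ ((j : ℝ) + 1) * ((i : ℝ) * v i) := by
        rw [div_le_iff₀ hj1] at h1
        nlinarith [h1]
      nlinarith [h2, mul_nonneg (mul_nonneg (le_of_lt hj1) hvi) (sub_nonneg.mpr hi1')]
    have hdiv := Real.tendsto_sum_range_one_div_nat_succ_atTop
    set Cb : ℝ := (∑ i ∈ range N1, 1 / ((i : ℝ) + 1)) + ((j : ℝ) + 1) * B with hCb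
    obtain ⟨M, hM1, hM2⟩ := ((hdiv.eventually_gt_atTop Cb).and (eventually_ge_atTop N1)).exists
    have hsplit : ∑ i ∈ range M, 1 / ((i : ℝ) + 1)
        = (∑ i ∈ range N1, 1 / ((i : ℝ) + 1)) + ∑ i ∈ Finset.Ico N1 M, 1 / ((i : ℝ) + 1) := by
      rw [Finset.range_eq_Ico, ← Finset.sum_Ico_consecutive _ (Nat.zero_le N1) hM2,
        ← Finset.range_eq_Ico]
    have hb1 : ∑ i ∈ Finset.Ico N1 M, 1 / ((i : ℝ) + 1)
        ≤ ((j : ℝ) + 1) * B := by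
      calc ∑ i ∈ Finset.Ico N1 M, 1 / ((i : ℝ) + 1)
          ≤ ∑ i ∈ Finset.Ico N1 M, ((j : ℝ) + 1) * v i :=
            Finset.sum_le_sum (hterm M)
        _ = ((j : ℝ) + 1) * ∑ i ∈ Finset.Ico N1 M, v i := by rw [Finset.mul_sum]
        _ ≤ ((j : ℝ) + 1) * B := by
            refine mul_le_mul_of_nonneg_left ?_ (by positivity)
            refine le_trans ?_ (hB M)
            refine Finset.sum_le_sum_of_subset_of_nonneg ?_ (fun i _ _ => hv i)
            intro i hi
            rw [Finset.mem_Ico] at hi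
            rw [Finset.mem_range]
            exact hi.2
    rw [hsplit] at hM1
    rw [hCb] at hM1
    linarith
  obtain ⟨φ, hφ, hφ2⟩ := Filter.extraction_forall_of_frequently freq
  refine ⟨φ, hφ, ?_⟩
  refine squeeze_zero (fun j => mul_nonneg (Nat.cast_nonneg _) (hv _)) (fun j => le_of_lt (hφ2 j)) ?_
  exact tendsto_one_div_add_atTop_nhds_zero_nat

variable {H : Type*} [NormedAddCommGroup H] [InnerProductSpace ℝ H] [CompleteSpace H]

theorem bd_weak_cluster (g : ℕ → H) (R : ℝ) (hb : ∀ n, ‖g n‖ ≤ R) :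
    ∃ (w : H) (φ : ℕ → ℕ), StrictMono φ ∧
      ∀ v : H, Tendsto (fun l => ⟪g (φ l), v⟫) atTop (𝓝 ⟪w, v⟫) := by
  have hR : 0 ≤ R := le_trans (norm_nonneg _) (hb 0)
  set V : Submodule ℝ H := (Submodule.span ℝ (Set.range g)).topologicalClosure with hV
  have hgV : ∀ n, g n ∈ V := fun n =>
    Submodule.le_topologicalClosure _ (Submodule.subset_span (Set.mem_range_self n))
  have hsep : IsSeparable (V : Set H) := by
    rw [hV, Submodule.topologicalClosure_coe]
    exact ((Set.countable_range g).isSeparable.span).closure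
  obtain ⟨c, hc_count, hc_sub⟩ := hsep
  have hc_ne : c.Nonempty := by
    rcases Set.eq_empty_or_nonempty c with h | h
    · exfalso
      have h0 : (0 : H) ∈ closure c := hc_sub (Submodule.zero_mem V)
      rw [h, closure_empty] at h0
      exact h0
    · exact h
  obtain ⟨v, hv⟩ := hc_count.exists_eq_range hc_ne
  -- compactness in the product space
  set K : Set (ℕ → ℝ) := Set.univ.pi fun i => Metric.closedBall 0 (R * ‖v i‖) with hK
  have hKc : IsCompact K := isCompact_univ_pi fun i => isCompact_closedBall _ _
  set G : ℕ → ℕ → ℝ := fun n i => ⟪g n, v i⟫ with hG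
  have hGK : ∀ n, G n ∈ K := by
    intro n
    rw [hK, Set.mem_univ_pi]
    intro i
    rw [Metric.mem_closedBall, Real.dist_eq, sub_zero]
    exact le_trans (abs_real_inner_le_norm _ _)
      (mul_le_mul_of_nonneg_right (hb n) (norm_nonneg _))
  obtain ⟨L, _, φ, hφ, hLconv⟩ := hKc.tendsto_subseq hGK
  have hcoord : ∀ i, Tendsto (fun l => ⟪g (φ l), v i⟫) atTop (𝓝 (L i)) := by
    intro i
    exact (tendsto_pi_nhds.mp hLconv) i
  -- Cauchy for all u in the closure of c
  have hkey : ∀ u : H, u ∈ closure c → CauchySeq fun l => ⟪g (φ l), u⟫ := by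
    intro u hu
    rw [Metric.cauchySeq_iff]
    intro ε hε
    have hε4 : 0 < ε / (4 * (R + 1)) := by positivity
    have : ∃ i, dist u (v i) < ε / (4 * (R + 1)) := by
      have := Metric.mem_closure_iff.mp hu _ hε4
      obtain ⟨y, hy, hyd⟩ := this
      rw [hv] at hy
      obtain ⟨i, rfl⟩ := hy
      exact ⟨i, hyd⟩
    obtain ⟨i, hi⟩ := this
    have hcauchy : CauchySeq fun l => ⟪g (φ l), v i⟫ := (hcoord i).cauchySeq
    rw [Metric.cauchySeq_iff] at hcauchy
    obtain ⟨N, hN⟩ := hcauchy (ε / 2) (by positivity)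
    refine ⟨N, fun m hm n hn => ?_⟩
    have h1 : ∀ l, |⟪g (φ l), u⟫ - ⟪g (φ l), v i⟫| ≤ R * (ε / (4 * (R + 1))) := by
      intro l
      rw [← inner_sub_right]
      refine le_trans (abs_real_inner_le_norm _ _) ?_
      refine mul_le_mul (hb _) ?_ (norm_nonneg _) hR
      rw [← dist_eq_norm]
      exact le_of_lt hi
    have h2 : R * (ε / (4 * (R + 1))) ≤ ε / 4 := by
      rw [mul_div_assoc', div_le_div_iff₀ (by positivity) (by norm_num : (0:ℝ) < 4)]
      nlinarith [le_of_lt hε]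
    have hd := hN m hm n hn
    rw [Real.dist_eq] at hd ⊢
    have e1 := h1 m
    have e2 := h1 n
    have : ⟪g (φ m), u⟫ - ⟪g (φ n), u⟫ =
        (⟪g (φ m), u⟫ - ⟪g (φ m), v i⟫) + (⟪g (φ m), v i⟫ - ⟪g (φ n), v i⟫)
        + (⟪g (φ n), v i⟫ - ⟪g (φ n), u⟫) := by ring
    rw [this]
    calc |_ + _ + _| ≤ |⟪g (φ m), u⟫ - ⟪g (φ m), v i⟫| + |⟪g (φ m), v i⟫ - ⟪g (φ n), v i⟫|
          + |⟪g (φ n), v i⟫ - ⟪g (φ n), u⟫| := by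
          exact le_trans (abs_add_le _ _) (by gcongr; exact abs_add_le _ _)
      _ < ε / 4 + ε / 2 + ε / 4 := by
          refine add_lt_add_of_lt_of_le (add_lt_add_of_le_of_lt (le_trans e1 h2) hd) ?_
          rw [abs_sub_comm]; exact le_trans e2 h2
      _ = ε := by ring
  -- convergence for every vector
  haveI : CompleteSpace V := Submodule.topologicalClosure.completeSpace _
  have hdecomp : ∀ u : H, ∀ l, ⟪g (φ l), u⟫ = ⟪g (φ l), (↑(V.orthogonalProjectionOnto u) : H)⟫ := by
    intro u l
    have horth : u - ↑(V.orthogonalProjectionOnto u) ∈ Vᗮ :=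
      V.sub_starProjection_mem_orthogonal u
    have := Submodule.inner_right_of_mem_orthogonal (hgV (φ l)) horth
    rw [inner_sub_right] at this
    linarith
  have hconv2 : ∀ u : H, ∃ r : ℝ, Tendsto (fun l => ⟪g (φ l), u⟫) atTop (𝓝 r) := by
    intro u
    have hmem : (↑(V.orthogonalProjectionOnto u) : H) ∈ closure c :=
      hc_sub (V.orthogonalProjectionOnto u).2
    obtain ⟨r, hr⟩ := cauchySeq_tendsto_of_complete (hkey _ hmem)
    refine ⟨r, ?_⟩
    have : (fun l => ⟪g (φ l), u⟫) = fun l => ⟪g (φ l), (↑(V.orthogonalProjectionOnto u) : H)⟫ :=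
      funext fun l => hdecomp u l
    rw [this]
    exact hr
  choose T hT using hconv2
  have hTadd : ∀ u u' : H, T (u + u') = T u + T u' := by
    intro u u'
    refine tendsto_nhds_unique ?_ ((hT u).add (hT u'))
    have : (fun l => ⟪g (φ l), u⟫ + ⟪g (φ l), u'⟫) = fun l => ⟪g (φ l), u + u'⟫ := by
      funext l; rw [inner_add_right]
    rw [this]; exact hT _
  have hTsmul : ∀ (a : ℝ) (u : H), T (a • u) = a * T u := by
    intro a u
    refine tendsto_nhds_unique ?_ ((hT u).const_mul a)
    have : (fun l => a * ⟪g (φ l), u⟫) = fun l => ⟪g (φ l), a • u⟫ := by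
      funext l; rw [real_inner_smul_right]
    rw [this]; exact hT _
  have hTbound : ∀ u : H, ‖T u‖ ≤ R * ‖u‖ := by
    intro u
    have : Tendsto (fun l => |⟪g (φ l), u⟫|) atTop (𝓝 |T u|) := (hT u).abs
    refine le_of_tendsto this (Eventually.of_forall fun l => ?_)
    exact le_trans (abs_real_inner_le_norm _ _)
      (mul_le_mul_of_nonneg_right (hb _) (norm_nonneg _))
  set Tlin : H →ₗ[ℝ] ℝ :=
    { toFun := T
      map_add' := hTadd
      map_smul' := hTsmul } with hTlin
  set Tc : H →L[ℝ] ℝ := Tlin.mkContinuous R hTbound with hTc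
  refine ⟨(InnerProductSpace.toDual ℝ H).symm Tc, φ, hφ, fun u => ?_⟩
  rw [InnerProductSpace.toDual_symm_apply]
  exact hT u


theorem dykstra_flat (s : ℕ) (hs : 0 < s) (C : ℕ → Set H)
    (hC : ∀ i, 1 ≤ i → i ≤ s → IsClosed (C i) ∧ Convex ℝ (C i))
    (u e : ℤ → H) (x ystar : H)
    (hu0 : ∀ k : ℤ, k ≤ 0 → u k = x)
    (he0 : ∀ k : ℤ, k ≤ 0 → e k = 0)
    (hstep : ∀ k : ℤ, 1 ≤ k → u (k-1) + e (k - (s:ℤ)) = u k + e k)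
    (huC : ∀ k : ℤ, 1 ≤ k → u k ∈ C (ph s k))
    (hVI : ∀ k : ℤ, 1 ≤ k → ∀ z ∈ C (ph s k), ⟪e k, z - u k⟫ ≤ 0)
    (hy : ∀ i, 1 ≤ i → i ≤ s → ystar ∈ C i)
    (hymin : ∀ z : H, (∀ i, 1 ≤ i → i ≤ s → z ∈ C i) → ‖x - ystar‖ ≤ ‖x - z‖) :
    Tendsto (fun N : ℕ => u N) atTop (𝓝 ystar) := by
  set S : ℤ := (s : ℤ) with hSdef
  have hS : 0 < S := by rw [hSdef]; exact_mod_cast hs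
  set d2 : ℝ := ‖x - ystar‖^2 with hd2def
  have hd2 : 0 ≤ d2 := sq_nonneg _
  -- phases are in range
  have hphmem : ∀ k : ℤ, 1 ≤ ph s k ∧ ph s k ≤ s := by
    intro k
    unfold ph
    have := Nat.mod_lt (k-1).toNat hs
    omega
  -- phase is s-periodic
  have hphper : ∀ k : ℤ, 1 ≤ k - S → ph s (k - S) = ph s k := by
    intro k hk
    have h1 : k - 1 = (k - S - 1) + S := by ring
    have h2 : (0:ℤ) ≤ k - S - 1 := by omega
    have h3 : (k-1).toNat = (k - S - 1).toNat + s := by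
      rw [h1]
      rw [Int.toNat_add h2 (le_of_lt hS)]
      simp [hSdef]
    unfold ph
    rw [h3, Nat.add_mod_right]
  -- canonical phase computation
  have hphcan : ∀ q i : ℕ, 1 ≤ i → i ≤ s → ph s (S*(q:ℤ) + (i:ℤ)) = i := by
    intro q i h1 h2
    have h3 : S*(q:ℤ) + (i:ℤ) - 1 = ((s*q + (i-1) : ℕ) : ℤ) := by
      simp only [hSdef]
      push_cast [Nat.cast_sub h1]
      ring
    unfold ph
    rw [h3, Int.toNat_natCast]
    rw [Nat.add_comm (s*q) (i-1), Nat.add_mul_mod_self_left, Nat.mod_eq_of_lt (by omega)]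
    omega
  -- e recursion
  have hek : ∀ k : ℤ, 1 ≤ k → e k = e (k - S) + (u (k-1) - u k) := by
    intro k hk
    have := hstep k hk
    have h : e k = u (k-1) + e (k - S) - u k := by
      rw [eq_sub_iff_add_eq, add_comm, this]
    rw [h]; abel
  -- nonnegativity of the cross terms
  have ht' : ∀ k : ℤ, 1 ≤ k → 0 ≤ ⟪e (k - S), u (k - S) - u k⟫ := by
    intro k hk
    rcases le_or_gt (k - S) 0 with h | h
    · rw [he0 _ h, inner_zero_left]
    · have h1 : 1 ≤ k - S := h
      have h2 := hVI (k - S) h1 (u k) (by rw [hphper k h1]; exact huC k hk)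
      have h3 : u (k - S) - u k = -(u k - u (k - S)) := by abel
      rw [h3, inner_neg_right]
      linarith
  -- the quantity b
  set b : ℤ → H → ℝ :=
    fun n y => ‖u n - y‖^2 + 2 * ∑ k ∈ Ioc (n - S) n, ⟪e k, u k - y⟫ with hbdef
  -- b recursion
  have brec : ∀ n : ℤ, 1 ≤ n → ∀ y : H,
      b n y = b (n-1) y - ‖u (n-1) - u n‖^2 - 2 * ⟪e (n - S), u (n - S) - u n⟫ := by
    intro n hn y
    have hsum1 : (∑ k ∈ Ioc (n - S) n, ⟪e k, u k - y⟫)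
        = (∑ k ∈ Ioc (n - S) (n-1), ⟪e k, u k - y⟫) + ⟪e n, u n - y⟫ := by
      have h := sumIocTop (fun k => ⟪e k, u k - y⟫) (n - S) (n-1) (by omega)
      simpa using h
    have hsing : Ioc (n-1-S) (n - S) = {n - S} := by
      rw [show n - S = (n-1-S)+1 by ring]
      exact IocSingle _
    have hsum2 : (∑ k ∈ Ioc (n-1-S) (n-1), ⟪e k, u k - y⟫)
        = ⟪e (n - S), u (n - S) - y⟫ + (∑ k ∈ Ioc (n - S) (n-1), ⟪e k, u k - y⟫) := by
      have h := sumIoc (fun k => ⟪e k, u k - y⟫) (n-1-S) (n - S) (n-1) (by omega) (by omega)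
      rw [← h, hsing, Finset.sum_singleton]
    have hu' : u (n-1) = u n + (u (n-1) - u n) := by abel
    have he' : e n = e (n - S) + (u (n-1) - u n) := hek n hn
    simp only [hbdef]
    rw [hsum1, hsum2]
    rw [he']
    rw [show u (n-1) - y = (u n - y) + (u (n-1) - u n) by abel]
    rw [norm_add_sq_real, real_inner_comm (u (n-1) - u n) (u n - y)]
    simp only [inner_add_left, inner_sub_right]
    ring
  -- b is bounded below for y ∈ C
  have bpos : ∀ n : ℤ, 0 ≤ n → ∀ y : H, (∀ i, 1 ≤ i → i ≤ s → y ∈ C i) →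
      ‖u n - y‖^2 ≤ b n y := by
    intro n hn y hyC
    have hsumnn : 0 ≤ ∑ k ∈ Ioc (n - S) n, ⟪e k, u k - y⟫ := by
      refine Finset.sum_nonneg fun k _ => ?_
      rcases le_or_gt k 0 with h | h
      · rw [he0 _ h, inner_zero_left]
      · have h2 := hVI k h y (hyC _ (hphmem k).1 (hphmem k).2)
        have h3 : u k - y = -(y - u k) := by abel
        rw [h3, inner_neg_right]
        linarith
    simp only [hbdef]
    linarith
  -- initial value
  have b0 : ∀ y : H, b 0 y = ‖x - y‖^2 := by
    intro y
    have hz : (∑ k ∈ Ioc (0 - S) 0, ⟪e k, u k - y⟫) = 0 := by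
      refine Finset.sum_eq_zero fun k hk => ?_
      rw [Finset.mem_Ioc] at hk
      rw [he0 _ hk.2, inner_zero_left]
    simp only [hbdef]
    rw [hz, hu0 0 le_rfl]
    ring
  -- the increment sum c
  set c : ℤ → ℝ :=
    fun n => ∑ k ∈ Ioc 0 n, (‖u (k-1) - u k‖^2 + 2 * ⟪e (k - S), u (k - S) - u k⟫) with hcdef
  have hbc : ∀ n : ℤ, 0 ≤ n → ∀ y : H, b n y = ‖x - y‖^2 - c n := by
    refine Int.le_induction ?_ ?_
    · intro y
      have hc0 : c 0 = 0 := by simp only [hcdef]; rw [Finset.Ioc_self, Finset.sum_empty]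
      rw [b0 y, hc0]; ring
    · intro n hn IH y
      have h1 := brec (n+1) (by omega) y
      rw [show n + 1 - 1 = n by ring] at h1
      have h2 : c (n+1) = c n
          + (‖u (n+1-1) - u (n+1)‖^2 + 2 * ⟪e (n+1 - S), u (n+1 - S) - u (n+1)⟫) := by
        simp only [hcdef]
        exact sumIocTop _ 0 n hn
      rw [show n + 1 - 1 = n by ring] at h2
      rw [h1, IH y, h2]
      ring
  have hcnonneg : ∀ n : ℤ, 0 ≤ c n := by
    intro n
    refine Finset.sum_nonneg fun k hk => ?_
    rw [Finset.mem_Ioc] at hk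
    have := ht' k hk.1
    have := sq_nonneg ‖u (k-1) - u k‖
    linarith
  have hcmono : ∀ m n : ℤ, 0 ≤ m → m ≤ n → c m ≤ c n := by
    intro m n hm hmn
    have h := sumIoc (fun k => ‖u (k-1) - u k‖^2 + 2 * ⟪e (k - S), u (k - S) - u k⟫) 0 m n hm hmn
    have h2 : 0 ≤ ∑ k ∈ Ioc m n, (‖u (k-1) - u k‖^2 + 2 * ⟪e (k - S), u (k - S) - u k⟫) := by
      refine Finset.sum_nonneg fun k hk => ?_
      rw [Finset.mem_Ioc] at hk
      have := ht' k (by omega)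
      have := sq_nonneg ‖u (k-1) - u k‖
      linarith
    simp only [hcdef]
    rw [← h]
    linarith
  have hcbound : ∀ n : ℤ, 0 ≤ n → c n ≤ d2 := by
    intro n hn
    have h1 := bpos n hn ystar hy
    have h2 := hbc n hn ystar
    rw [h2] at h1
    have := sq_nonneg ‖u n - ystar‖
    rw [hd2def]
    nlinarith [h1]
  -- sum of squared increments is bounded
  have hsumΔ : ∀ n : ℤ, 0 ≤ n → (∑ k ∈ Ioc 0 n, ‖u (k-1) - u k‖^2) ≤ c n := by
    intro n _
    refine Finset.sum_le_sum fun k hk => ?_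
    rw [Finset.mem_Ioc] at hk
    have := ht' k hk.1
    linarith
  -- identity: x - u n = sum of the last s residuals
  have hsume : ∀ n : ℤ, 0 ≤ n → x - u n = ∑ k ∈ Ioc (n - S) n, e k := by
    refine Int.le_induction ?_ ?_
    · rw [hu0 0 le_rfl, sub_self]
      refine (Finset.sum_eq_zero fun k hk => ?_).symm
      rw [Finset.mem_Ioc] at hk
      exact he0 _ hk.2
    · intro n hn IH
      have h1 : (∑ k ∈ Ioc (n - S) n, e k)
          = e (n+1 - S) + ∑ k ∈ Ioc (n+1 - S) n, e k := by
        have h := sumIoc e (n - S) (n+1 - S) n (by omega) (by omega)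
        have hsing : Ioc (n - S) (n+1 - S) = {n+1 - S} := by
          rw [show n+1 - S = (n-S)+1 by ring]
          exact IocSingle _
        rw [← h, hsing, Finset.sum_singleton]
      have h2 : (∑ k ∈ Ioc (n+1 - S) (n+1), e k)
          = (∑ k ∈ Ioc (n+1 - S) n, e k) + e (n+1) := by
        have h := sumIocTop e (n+1 - S) n (by omega)
        simpa using h
      have h3 : e (n+1) = e (n+1 - S) + (u n - u (n+1)) := by
        have := hek (n+1) (by omega)
        rwa [show n + 1 - 1 = n by ring] at this
      have IH' : x - u n = e (n+1 - S) + ∑ k ∈ Ioc (n+1 - S) n, e k := IH.trans h1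
      rw [h2, h3]
      rw [show x - u (n+1) = (x - u n) + (u n - u (n+1)) by abel, IH']
      abel
  -- D n
  set D : ℤ → ℝ := fun n => ∑ k ∈ Ioc (n - S) n, ⟪e k, u k - u n⟫ with hDdef
  have hcD : ∀ n : ℤ, 0 ≤ n → c n = ‖x - u n‖^2 - 2 * D n := by
    intro n hn
    have h1 := hbc n hn ystar
    have hsplit : (∑ k ∈ Ioc (n - S) n, ⟪e k, u k - ystar⟫)
        = D n + ⟪x - u n, u n - ystar⟫ := by
      have h2 : ∀ k ∈ Ioc (n - S) n, ⟪e k, u k - ystar⟫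
          = ⟪e k, u k - u n⟫ + ⟪e k, u n - ystar⟫ := by
        intro k _
        rw [← inner_add_right]
        congr 1
        abel
      rw [Finset.sum_congr rfl h2, Finset.sum_add_distrib]
      simp only [hDdef]
      congr 1
      rw [← sum_inner, ← hsume n hn]
    have h3 : b n ystar = ‖u n - ystar‖^2 + 2 * (D n + ⟪x - u n, u n - ystar⟫) := by
      simp only [hbdef]
      rw [hsplit]
    have h4 : ‖x - ystar‖^2 = ‖x - u n‖^2 + 2*⟪x - u n, u n - ystar⟫ + ‖u n - ystar‖^2 := by
      rw [show x - ystar = (x - u n) + (u n - ystar) by abel, norm_add_sq_real]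
    rw [h3] at h1
    linarith
  -- norm bound on the residuals
  have htel : ∀ a bb : ℤ, a ≤ bb → u a - u bb = ∑ l ∈ Ioc a bb, (u (l-1) - u l) := by
    intro a
    refine Int.le_induction ?_ ?_
    · rw [sub_self, Finset.Ioc_self, Finset.sum_empty]
    · intro n hn IH
      have h := sumIocTop (fun l => u (l-1) - u l) a n hn
      simp only [add_sub_cancel_right] at h
      rw [h, ← IH]
      abel
  have heboundN : ∀ K : ℕ, ∀ k : ℤ, k = K → ‖e k‖ ≤ ∑ l ∈ Ioc 0 k, ‖u (l-1) - u l‖ := by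
    intro K
    induction K using Nat.strong_induction_on with
    | _ K IH =>
      intro k hkK
      rcases le_or_gt k 0 with h | h
      · rw [he0 _ h, norm_zero]
        exact Finset.sum_nonneg fun l _ => norm_nonneg _
      · have h1 : ‖e k‖ ≤ ‖e (k - S)‖ + ‖u (k-1) - u k‖ := by
          rw [hek k h]; exact norm_add_le _ _
        have hsumtop : (∑ l ∈ Ioc 0 k, ‖u (l-1) - u l‖)
            = (∑ l ∈ Ioc 0 (k-1), ‖u (l-1) - u l‖) + ‖u (k-1) - u k‖ := by
          have h2 := sumIocTop (fun l => ‖u (l-1) - u l‖) 0 (k-1) (by omega)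
          simpa using h2
        rcases le_or_gt (k - S) 0 with h2 | h2
        · rw [he0 _ h2, norm_zero, zero_add] at h1
          rw [hsumtop]
          have h3 : 0 ≤ ∑ l ∈ Ioc 0 (k-1), ‖u (l-1) - u l‖ :=
            Finset.sum_nonneg fun l _ => norm_nonneg _
          linarith
        · have hlt : (k - S).toNat < K := by omega
          have h3 := IH (k - S).toNat hlt (k - S) (by omega)
          have h4 : (∑ l ∈ Ioc 0 (k - S), ‖u (l-1) - u l‖)
              ≤ ∑ l ∈ Ioc 0 (k-1), ‖u (l-1) - u l‖ := by
            refine Finset.sum_le_sum_of_subset_of_nonneg ?_ fun l _ _ => norm_nonneg _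
            exact Finset.Ioc_subset_Ioc_right (by omega)
          rw [hsumtop]
          linarith
  have hebound : ∀ k : ℤ, ‖e k‖ ≤ ∑ l ∈ Ioc 0 k, ‖u (l-1) - u l‖ := by
    intro k
    rcases le_or_gt k 0 with h | h
    · rw [he0 _ h, norm_zero]
      exact Finset.sum_nonneg fun l _ => norm_nonneg _
    · exact heboundN k.toNat k (by omega)
  -- total bounds
  have hd2' : ∀ n : ℤ, 0 ≤ n → (∑ k ∈ Ioc 0 n, ‖u (k-1) - u k‖^2) ≤ d2 :=
    fun n hn => le_trans (hsumΔ n hn) (hcbound n hn)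
  -- Cauchy-Schwarz for sums of increments
  have hCSsum : ∀ a bnd : ℤ, (∑ l ∈ Ioc a bnd, ‖u (l-1) - u l‖)^2
      ≤ (((bnd - a).toNat : ℕ) : ℝ) * ∑ l ∈ Ioc a bnd, ‖u (l-1) - u l‖^2 := by
    intro a bnd
    have hCS := Finset.sum_mul_sq_le_sq_mul_sq (Ioc a bnd) (fun _ => (1:ℝ))
      (fun l => ‖u (l-1) - u l‖)
    simp only [one_mul, one_pow] at hCS
    rwa [Finset.sum_const, Int.card_Ioc, nsmul_eq_mul, mul_one] at hCS
  -- residual norm bound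
  have hebound2 : ∀ k : ℤ, 0 ≤ k → ‖e k‖^2 ≤ (k : ℝ) * d2 := by
    intro k hk
    have h1 := hebound k
    have h2 := hCSsum 0 k
    rw [sub_zero] at h2
    have h3 : ((k.toNat : ℕ) : ℝ) = (k : ℝ) := by
      have h3' := Int.toNat_of_nonneg hk
      exact_mod_cast h3'
    rw [h3] at h2
    have h4 : ‖e k‖^2 ≤ (∑ l ∈ Ioc 0 k, ‖u (l-1) - u l‖)^2 :=
      pow_le_pow_left₀ (norm_nonneg _) h1 2
    have h5 : (∑ l ∈ Ioc 0 k, ‖u (l-1) - u l‖^2) ≤ d2 := hd2' k hk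
    have h6 : (k:ℝ) * (∑ l ∈ Ioc 0 k, ‖u (l-1) - u l‖^2) ≤ (k:ℝ) * d2 :=
      mul_le_mul_of_nonneg_left h5 (by exact_mod_cast hk)
    linarith
  -- per-cycle sums
  set vm : ℕ → ℝ := fun m => ∑ k ∈ Ioc (S*m) (S*m + S), ‖u (k-1) - u k‖^2 with hvmdef
  have hvnn : ∀ m, 0 ≤ vm m := fun m => Finset.sum_nonneg fun k _ => sq_nonneg _
  have hvsum : ∀ M : ℕ, (∑ m ∈ range M, vm m) = ∑ k ∈ Ioc 0 (S*M), ‖u (k-1) - u k‖^2 := by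
    intro M
    induction M with
    | zero => simp
    | succ M IH =>
      rw [Finset.sum_range_succ, IH]
      have h := sumIoc (fun k => ‖u (k-1) - u k‖^2) 0 (S*M) (S*M + S)
        (by positivity) (by linarith)
      have h2 : S * ((M:ℤ)+1) = S*M + S := by ring
      simp only [hvmdef]
      rw [show ((M+1 : ℕ) : ℤ) = (M:ℤ)+1 by push_cast; ring, h2, ← h]
  have hvbound : ∀ M : ℕ, (∑ m ∈ range M, vm m) ≤ d2 := by
    intro M
    rw [hvsum M]
    exact hd2' _ (by positivity)
  obtain ⟨ψ, hψmono, hψlim⟩ := bd_small_freq vm hvnn d2 hvbound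
  -- subsequence of cycle ends
  set nj : ℕ → ℤ := fun j => S * (ψ j) + S with hnjdef
  have hnjS : ∀ j, S ≤ nj j := by
    intro j
    have : 0 ≤ S * (ψ j) := by positivity
    simp only [hnjdef]
    linarith
  have hnjpos : ∀ j, 0 ≤ nj j := fun j => le_trans (le_of_lt hS) (hnjS j)
  -- distance within a cycle
  have hδ : ∀ j, ∀ k ∈ Ioc (nj j - S) (nj j), ‖u k - u (nj j)‖
      ≤ Real.sqrt ((s:ℝ) * vm (ψ j)) := by
    intro j k hk
    rw [Finset.mem_Ioc] at hk
    have h1 : u k - u (nj j) = ∑ l ∈ Ioc k (nj j), (u (l-1) - u l) := htel k (nj j) hk.2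
    have h2 : ‖u k - u (nj j)‖ ≤ ∑ l ∈ Ioc k (nj j), ‖u (l-1) - u l‖ := by
      rw [h1]; exact norm_sum_le _ _
    have h3 : (∑ l ∈ Ioc k (nj j), ‖u (l-1) - u l‖)
        ≤ ∑ l ∈ Ioc (nj j - S) (nj j), ‖u (l-1) - u l‖ := by
      refine Finset.sum_le_sum_of_subset_of_nonneg ?_ fun l _ _ => norm_nonneg _
      exact Finset.Ioc_subset_Ioc_left (le_of_lt hk.1)
    have h4 := hCSsum (nj j - S) (nj j)
    have hcard : ((((nj j) - (nj j - S)).toNat : ℕ) : ℝ) = (s:ℝ) := by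
      rw [show (nj j) - (nj j - S) = S by ring]
      simp [hSdef]
    rw [hcard] at h4
    have h5 : (∑ l ∈ Ioc (nj j - S) (nj j), ‖u (l-1) - u l‖^2) = vm (ψ j) := by
      simp only [hvmdef]
      congr 1
      rw [show nj j - S = S * (ψ j) by simp only [hnjdef]; ring,
        show nj j = S * (ψ j) + S by simp only [hnjdef]]
    rw [h5] at h4
    have h6 : 0 ≤ ∑ l ∈ Ioc (nj j - S) (nj j), ‖u (l-1) - u l‖ :=
      Finset.sum_nonneg fun l _ => norm_nonneg _
    have h7 : (∑ l ∈ Ioc (nj j - S) (nj j), ‖u (l-1) - u l‖)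
        ≤ Real.sqrt ((s:ℝ) * vm (ψ j)) := by
      rw [show (∑ l ∈ Ioc (nj j - S) (nj j), ‖u (l-1) - u l‖)
        = Real.sqrt ((∑ l ∈ Ioc (nj j - S) (nj j), ‖u (l-1) - u l‖)^2) from
        (Real.sqrt_sq h6).symm]
      exact Real.sqrt_le_sqrt h4
    linarith
  -- bound on D along the subsequence
  have hDbound : ∀ j, |D (nj j)| ≤ (s:ℝ) *
      (Real.sqrt (((nj j : ℤ) : ℝ) * d2) * Real.sqrt ((s:ℝ) * vm (ψ j))) := by
    intro j
    have hterm : ∀ k ∈ Ioc (nj j - S) (nj j), |⟪e k, u k - u (nj j)⟫|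
        ≤ Real.sqrt (((nj j : ℤ) : ℝ) * d2) * Real.sqrt ((s:ℝ) * vm (ψ j)) := by
      intro k hk
      have hkmem := hk
      rw [Finset.mem_Ioc] at hk
      have hk0 : 0 ≤ k := by
        have := hnjS j
        omega
      have he2 : ‖e k‖ ≤ Real.sqrt (((nj j : ℤ) : ℝ) * d2) := by
        rw [show ‖e k‖ = Real.sqrt (‖e k‖^2) from (Real.sqrt_sq (norm_nonneg _)).symm]
        refine Real.sqrt_le_sqrt ?_
        refine le_trans (hebound2 k hk0) ?_
        refine mul_le_mul_of_nonneg_right ?_ hd2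
        exact_mod_cast hk.2
      refine le_trans (abs_real_inner_le_norm _ _) ?_
      exact mul_le_mul he2 (hδ j k hkmem) (norm_nonneg _) (Real.sqrt_nonneg _)
    calc |D (nj j)| ≤ ∑ k ∈ Ioc (nj j - S) (nj j), |⟪e k, u k - u (nj j)⟫| := by
          simp only [hDdef]
          exact Finset.abs_sum_le_sum_abs _ _
      _ ≤ ∑ _k ∈ Ioc (nj j - S) (nj j),
            Real.sqrt (((nj j : ℤ) : ℝ) * d2) * Real.sqrt ((s:ℝ) * vm (ψ j)) :=
          Finset.sum_le_sum hterm
      _ = (s:ℝ) * (Real.sqrt (((nj j : ℤ) : ℝ) * d2) * Real.sqrt ((s:ℝ) * vm (ψ j))) := by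
          rw [Finset.sum_const, Int.card_Ioc, nsmul_eq_mul]
          congr 1
          rw [show (nj j) - (nj j - S) = S by ring]
          simp [hSdef]
  -- vm (ψ j) tends to zero
  have hvψ0 : Tendsto (fun j => vm (ψ j)) atTop (𝓝 0) := by
    have hbnd : ∀ j, 1 ≤ j → vm (ψ j) ≤ (ψ j : ℝ) * vm (ψ j) := by
      intro j hj
      have h1 : 1 ≤ ψ j := le_trans hj (hψmono.le_apply)
      have h2 : (1:ℝ) ≤ (ψ j : ℝ) := by exact_mod_cast h1
      nlinarith [hvnn (ψ j)]
    refine tendsto_of_tendsto_of_tendsto_of_le_of_le' tendsto_const_nhds hψlim ?_ ?_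
    · exact Eventually.of_forall fun j => hvnn (ψ j)
    · exact eventually_atTop.mpr ⟨1, hbnd⟩
  -- D (nj j) tends to zero
  have hw0 : Tendsto (fun j => ((ψ j : ℝ) + 1) * vm (ψ j)) atTop (𝓝 0) := by
    have h1 : (fun j => ((ψ j : ℝ) + 1) * vm (ψ j))
        = fun j => (ψ j : ℝ) * vm (ψ j) + vm (ψ j) := by funext j; ring
    rw [h1]
    simpa using hψlim.add hvψ0
  have hDlim : Tendsto (fun j => D (nj j)) atTop (𝓝 0) := by
    refine squeeze_zero_norm
      (a := fun j => (s:ℝ) * Real.sqrt ((s:ℝ)^2 * d2 * (((ψ j : ℝ) + 1) * vm (ψ j))))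
      (fun j => ?_) ?_
    · show ‖D (nj j)‖ ≤ (s:ℝ) * Real.sqrt ((s:ℝ)^2 * d2 * (((ψ j : ℝ) + 1) * vm (ψ j)))
      have hcast : ((nj j : ℤ) : ℝ) = (s:ℝ) * ((ψ j : ℝ) + 1) := by
        simp only [hnjdef, hSdef]; push_cast; ring
      have harg : ((nj j : ℤ) : ℝ) * d2 * ((s:ℝ) * vm (ψ j))
          = (s:ℝ)^2 * d2 * (((ψ j:ℝ)+1) * vm (ψ j)) := by
        rw [hcast]; ring
      have hnn : 0 ≤ ((nj j : ℤ) : ℝ) * d2 := by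
        refine mul_nonneg ?_ hd2
        exact_mod_cast hnjpos j
      have hsq : Real.sqrt (((nj j : ℤ):ℝ) * d2) * Real.sqrt ((s:ℝ) * vm (ψ j))
          = Real.sqrt (((nj j : ℤ):ℝ) * d2 * ((s:ℝ) * vm (ψ j))) :=
        (Real.sqrt_mul hnn _).symm
      rw [Real.norm_eq_abs]
      refine le_trans (hDbound j) ?_
      rw [hsq, harg]
    · have h1 : Tendsto (fun j => (s:ℝ)^2 * d2 * (((ψ j:ℝ)+1) * vm (ψ j))) atTop (𝓝 0) := by
        simpa using hw0.const_mul ((s:ℝ)^2 * d2)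
      have h2 : Tendsto (fun j => Real.sqrt ((s:ℝ)^2 * d2 * (((ψ j:ℝ)+1) * vm (ψ j))))
          atTop (𝓝 0) := by
        have h3 := (Real.continuous_sqrt.tendsto 0).comp h1
        rw [Real.sqrt_zero] at h3
        exact h3
      simpa using h2.const_mul (s:ℝ)
  -- the monotone limit of c
  set γ : ℕ → ℝ := fun N => c (N : ℤ) with hγdef
  have hγmono : Monotone γ := by
    intro a bb hab
    exact hcmono a bb (by positivity) (by exact_mod_cast hab)
  have hγbdd : BddAbove (Set.range γ) := by
    refine ⟨d2, ?_⟩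
    rintro r ⟨N, rfl⟩
    exact hcbound N (by positivity)
  set cinf : ℝ := ⨆ N, γ N with hcinfdef
  have hγlim : Tendsto γ atTop (𝓝 cinf) := tendsto_atTop_ciSup hγmono hγbdd
  have hcinf_le : cinf ≤ d2 := ciSup_le fun N => hcbound N (by positivity)
  have hcinf_nonneg : 0 ≤ cinf := le_trans (show 0 ≤ γ 0 from hcnonneg _) (le_ciSup hγbdd 0)
  have hnjNat : Tendsto (fun j => (nj j).toNat) atTop atTop := by
    refine tendsto_atTop_mono (fun j => ?_) tendsto_id
    show j ≤ (nj j).toNat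
    have h1 : (j:ℤ) ≤ (ψ j : ℤ) := by exact_mod_cast hψmono.le_apply
    have h2 : ((ψ j : ℕ):ℤ) ≤ S * (ψ j) := le_mul_of_one_le_left (by positivity) hS
    have h3 : (j : ℤ) ≤ nj j := by
      simp only [hnjdef]
      linarith
    omega
  have hc_nj : Tendsto (fun j => c (nj j)) atTop (𝓝 cinf) := by
    have heq : (fun j => c (nj j)) = fun j => γ ((nj j).toNat) := by
      funext j
      simp only [hγdef]
      rw [Int.toNat_of_nonneg (hnjpos j)]
    rw [heq]
    exact hγlim.comp hnjNat
  have hxulim : Tendsto (fun j => ‖x - u (nj j)‖^2) atTop (𝓝 cinf) := by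
    have heq : ∀ j, ‖x - u (nj j)‖^2 = c (nj j) + 2 * D (nj j) := by
      intro j
      have := hcD (nj j) (hnjpos j)
      linarith
    simp only [heq]
    have h1 := hc_nj.add (hDlim.const_mul 2)
    simpa using h1
  -- boundedness
  have hub : ∀ n : ℤ, 0 ≤ n → ‖u n - ystar‖^2 ≤ d2 - c n := by
    intro n hn
    have h1 := bpos n hn ystar hy
    rw [hbc n hn ystar] at h1
    rw [hd2def]
    linarith
  have hubn : ∀ j, ‖u (nj j)‖ ≤ ‖x - ystar‖ + ‖ystar‖ := by
    intro j
    have h1 := hub (nj j) (hnjpos j)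
    have h2 : ‖u (nj j) - ystar‖^2 ≤ d2 := le_trans h1 (by linarith [hcnonneg (nj j)])
    have h3 : ‖u (nj j) - ystar‖ ≤ ‖x - ystar‖ := by
      calc ‖u (nj j) - ystar‖ = Real.sqrt (‖u (nj j) - ystar‖^2) :=
            (Real.sqrt_sq (norm_nonneg _)).symm
        _ ≤ Real.sqrt d2 := Real.sqrt_le_sqrt h2
        _ = ‖x - ystar‖ := by rw [hd2def, Real.sqrt_sq (norm_nonneg _)]
    calc ‖u (nj j)‖ = ‖(u (nj j) - ystar) + ystar‖ := by congr 1; abel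
      _ ≤ ‖u (nj j) - ystar‖ + ‖ystar‖ := norm_add_le _ _
      _ ≤ ‖x - ystar‖ + ‖ystar‖ := by linarith
  -- a weak cluster point
  obtain ⟨w, φw, hφwmono, hweak⟩ := bd_weak_cluster (fun j => u (nj j)) _ hubn
  have hvψφ : Tendsto (fun l => vm (ψ (φw l))) atTop (𝓝 0) :=
    hvψ0.comp hφwmono.tendsto_atTop
  have hsql : Tendsto (fun l => Real.sqrt ((s:ℝ) * vm (ψ (φw l)))) atTop (𝓝 0) := by
    have h1 : Tendsto (fun l => (s:ℝ) * vm (ψ (φw l))) atTop (𝓝 0) := by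
      simpa using hvψφ.const_mul (s:ℝ)
    have h2 := (Real.continuous_sqrt.tendsto 0).comp h1
    rw [Real.sqrt_zero] at h2
    exact h2
  -- the weak limit lies in every C i
  have hwC : ∀ i, 1 ≤ i → i ≤ s → w ∈ C i := by
    intro i h1i his
    set pk : ℕ → ℤ := fun l => nj (φw l) - S + i with hpkdef
    have hpk1 : ∀ l, 1 ≤ pk l := by
      intro l
      have h2 : S ≤ nj (φw l) := hnjS _
      have h3 : (1:ℤ) ≤ (i:ℤ) := by exact_mod_cast h1i
      simp only [hpkdef]
      linarith
    have hpkmem : ∀ l, pk l ∈ Ioc (nj (φw l) - S) (nj (φw l)) := by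
      intro l
      rw [Finset.mem_Ioc]
      have h3 : (0:ℤ) < (i:ℤ) := by exact_mod_cast h1i
      have h4 : (i:ℤ) ≤ S := by rw [hSdef]; exact_mod_cast his
      constructor
      · simp only [hpkdef]; linarith
      · simp only [hpkdef]; linarith
    have hpkC : ∀ l, u (pk l) ∈ C i := by
      intro l
      have h2 := huC (pk l) (hpk1 l)
      have h4 : pk l = S * ((ψ (φw l)):ℤ) + (i:ℤ) := by
        simp only [hpkdef, hnjdef]; ring
      have h3 : ph s (pk l) = i := by
        rw [h4]; exact hphcan _ i h1i his
      rwa [h3] at h2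
    obtain ⟨p, hpC, hpinf⟩ := exists_norm_eq_iInf_of_complete_convex
      ⟨ystar, hy i h1i his⟩ ((hC i h1i his).1.isComplete) (hC i h1i his).2 w
    have hVIp := (norm_eq_iInf_iff_real_inner_le_zero (hC i h1i his).2 hpC).mp hpinf
    have T1 : Tendsto (fun l => ⟪w - p, u (pk l) - u (nj (φw l))⟫) atTop (𝓝 0) := by
      refine squeeze_zero_norm
        (a := fun l => ‖w - p‖ * Real.sqrt ((s:ℝ) * vm (ψ (φw l))))
        (fun l => ?_) ?_
      · show ‖⟪w - p, u (pk l) - u (nj (φw l))⟫‖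
          ≤ ‖w - p‖ * Real.sqrt ((s:ℝ) * vm (ψ (φw l)))
        rw [Real.norm_eq_abs]
        refine le_trans (abs_real_inner_le_norm _ _) ?_
        exact mul_le_mul_of_nonneg_left (hδ _ _ (hpkmem l)) (norm_nonneg _)
      · simpa using hsql.const_mul ‖w - p‖
    have T2 : Tendsto (fun l => ⟪u (nj (φw l)), w - p⟫) atTop (𝓝 ⟪w, w - p⟫) :=
      hweak (w - p)
    have hlim : Tendsto (fun l => ⟪w - p, u (pk l) - p⟫) atTop (𝓝 ⟪w - p, w - p⟫) := by
      have hdec : ∀ l, ⟪w - p, u (pk l) - p⟫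
          = ⟪w - p, u (pk l) - u (nj (φw l))⟫ + ⟪u (nj (φw l)), w - p⟫ - ⟪p, w - p⟫ := by
        intro l
        have h5 : u (pk l) - p = (u (pk l) - u (nj (φw l))) + u (nj (φw l)) - p := by abel
        rw [h5, inner_sub_right, inner_add_right,
          real_inner_comm (w - p) (u (nj (φw l))), real_inner_comm (w - p) p]
      have hval : (0:ℝ) + ⟪w, w - p⟫ - ⟪p, w - p⟫ = ⟪w - p, w - p⟫ := by
        rw [inner_sub_left]; ring
      have h6 := (T1.add T2).sub (tendsto_const_nhds (x := ⟪p, w - p⟫))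
      rw [hval] at h6
      simp only [hdec]
      exact h6
    have hle : ⟪w - p, w - p⟫ ≤ 0 :=
      le_of_tendsto hlim (Eventually.of_forall fun l => hVIp _ (hpkC l))
    have hwp : w - p = 0 := by rwa [real_inner_self_nonpos] at hle
    have hwp2 : w = p := by rwa [sub_eq_zero] at hwp
    rw [hwp2]
    exact hpC
  -- cinf is at least d2
  have hdw : ‖x - ystar‖ ≤ ‖x - w‖ := hymin w hwC
  have hweak2 : Tendsto (fun l => ⟪x - u (nj (φw l)), x - w⟫) atTop (𝓝 ⟪x - w, x - w⟫) := by
    have hdec : ∀ l, ⟪x - u (nj (φw l)), x - w⟫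
        = ⟪x, x - w⟫ - ⟪u (nj (φw l)), x - w⟫ := by
      intro l
      rw [inner_sub_left]
    have h1 := (tendsto_const_nhds (x := ⟪x, x - w⟫)).sub (hweak (x - w))
    have hval : ⟪x, x - w⟫ - ⟪w, x - w⟫ = ⟪x - w, x - w⟫ := by rw [inner_sub_left]
    rw [hval] at h1
    simp only [hdec]
    exact h1
  have hA : Tendsto (fun l => ‖x - u (nj (φw l))‖) atTop (𝓝 (Real.sqrt cinf)) := by
    have h1 : Tendsto (fun l => ‖x - u (nj (φw l))‖^2) atTop (𝓝 cinf) :=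
      hxulim.comp hφwmono.tendsto_atTop
    have h2 : Tendsto (fun l => Real.sqrt (‖x - u (nj (φw l))‖^2)) atTop
        (𝓝 (Real.sqrt cinf)) := (Real.continuous_sqrt.tendsto cinf).comp h1
    have h3 : (fun l => Real.sqrt (‖x - u (nj (φw l))‖^2))
        = fun l => ‖x - u (nj (φw l))‖ := funext fun l => Real.sqrt_sq (norm_nonneg _)
    rwa [h3] at h2
  have hxwle : ‖x - w‖ ≤ Real.sqrt cinf := by
    have h1 : ⟪x - w, x - w⟫ ≤ Real.sqrt cinf * ‖x - w‖ := by
      refine le_of_tendsto_of_tendsto' hweak2 (hA.mul_const ‖x - w‖) fun l => ?_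
      exact real_inner_le_norm _ _
    rw [real_inner_self_eq_norm_mul_norm] at h1
    rcases eq_or_lt_of_le (norm_nonneg (x - w)) with h0 | h0
    · rw [← h0]; exact Real.sqrt_nonneg _
    · exact le_of_mul_le_mul_right h1 h0
  have hd2cinf : d2 ≤ cinf := by
    have h1 : ‖x - ystar‖ ≤ Real.sqrt cinf := le_trans hdw hxwle
    have h2 : ‖x - ystar‖^2 ≤ (Real.sqrt cinf)^2 := by
      exact pow_le_pow_left₀ (norm_nonneg _) h1 2
    rw [Real.sq_sqrt hcinf_nonneg] at h2
    rw [hd2def]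
    exact h2
  have hcinf_eq : cinf = d2 := le_antisymm hcinf_le hd2cinf
  -- conclusion
  have hsq0 : Tendsto (fun N : ℕ => ‖u N - ystar‖^2) atTop (𝓝 0) := by
    refine squeeze_zero (g := fun N : ℕ => d2 - γ N) (fun N => sq_nonneg _) (fun N => ?_) ?_
    · show ‖u N - ystar‖^2 ≤ d2 - γ N
      exact hub N (by positivity)
    · have h1 : Tendsto (fun N : ℕ => d2 - γ N) atTop (𝓝 (d2 - cinf)) :=
        tendsto_const_nhds.sub hγlim
      rw [hcinf_eq, sub_self] at h1
      exact h1
  have hnorm0 : Tendsto (fun N : ℕ => ‖u N - ystar‖) atTop (𝓝 0) := by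
    have h2 : Tendsto (fun N : ℕ => Real.sqrt (‖u N - ystar‖^2)) atTop
        (𝓝 (Real.sqrt 0)) := (Real.continuous_sqrt.tendsto 0).comp hsq0
    rw [Real.sqrt_zero] at h2
    have h3 : (fun N : ℕ => Real.sqrt (‖u N - ystar‖^2))
        = fun N : ℕ => ‖u N - ystar‖ := funext fun N => Real.sqrt_sq (norm_nonneg _)
    rwa [h3] at h2
  exact tendsto_iff_norm_sub_tendsto_zero.mpr hnorm0


end BD9


open Finset in
theorem statement9 {H : Type*} [NormedAddCommGroup H] [InnerProductSpace ℝ H]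
    [CompleteSpace H]
    (s : ℕ) (hs : 0 < s)
    (C : ℕ → Set H)
    (hC : ∀ i, 1 ≤ i → i ≤ s → IsClosed (C i) ∧ Convex ℝ (C i) ∧ (C i).Nonempty)
    -- the intersection C = C_1 ∩ ⋯ ∩ C_s is nonempty
    (hint : (⋂ i ∈ Set.Icc 1 s, C i).Nonempty)
    -- P i is the metric projection onto C i, for i ∈ {1, …, s}
    (P : ℕ → H → H)
    (hP : ∀ i, 1 ≤ i → i ≤ s → ∀ y, P i y ∈ C i ∧ ∀ z ∈ C i, dist y (P i y) ≤ dist y z)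
    -- PC is the metric projection onto the intersection
    (PC : H → H)
    (hPC : ∀ y, PC y ∈ ⋂ i ∈ Set.Icc 1 s, C i ∧
      ∀ z ∈ ⋂ i ∈ Set.Icc 1 s, C i, dist y (PC y) ≤ dist y z)
    -- Dykstra's algorithm: X n i is x_n^{(i)}, Q n i is q_n^{(i)}
    (x : H) (X Q : ℕ → ℕ → H)
    (hX0 : X 0 s = x)
    (hQ0 : ∀ i, 1 ≤ i → i ≤ s → Q 0 i = 0)
    (hcycle : ∀ n, X (n + 1) 0 = X n s)
    (hstep : ∀ n, ∀ i, 1 ≤ i → i ≤ s →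
      X (n + 1) i = P i (X (n + 1) (i - 1) + Q n i) ∧
      Q (n + 1) i = X (n + 1) (i - 1) + Q n i - X (n + 1) i) :
    -- each sequence x_n^{(i)} converges in norm to P_C x
    ∀ i, 1 ≤ i → i ≤ s → Tendsto (fun n => X n i) atTop (𝓝 (PC x)) := by
  intro i h1i his
  have hCc : ∀ j, 1 ≤ j → j ≤ s → IsClosed (C j) ∧ Convex ℝ (C j) :=
    fun j h1 h2 => ⟨(hC j h1 h2).1, (hC j h1 h2).2.1⟩
  set ystar := PC x with hystar
  have hyC : ∀ j, 1 ≤ j → j ≤ s → ystar ∈ C j := by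
    intro j h1 h2
    exact Set.mem_iInter₂.mp (hPC x).1 j ⟨h1, h2⟩
  have hymin : ∀ z : H, (∀ j, 1 ≤ j → j ≤ s → z ∈ C j) → ‖x - ystar‖ ≤ ‖x - z‖ := by
    intro z hz
    have hzmem : z ∈ ⋂ j ∈ Set.Icc 1 s, C j :=
      Set.mem_iInter₂.mpr fun j hj => hz j hj.1 hj.2
    have h2 := (hPC x).2 z hzmem
    rwa [dist_eq_norm, dist_eq_norm] at h2
  -- flattened sequences
  set u : ℤ → H := fun k => if k ≤ 0 then x
    else X ((k.toNat - 1) / s + 1) ((k.toNat - 1) % s + 1) with hudef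
  set e : ℤ → H := fun k => if k ≤ 0 then 0
    else Q ((k.toNat - 1) / s + 1) ((k.toNat - 1) % s + 1) with hedef
  have hu0 : ∀ k : ℤ, k ≤ 0 → u k = x := fun k hk => by
    simp only [hudef]; rw [if_pos hk]
  have he0 : ∀ k : ℤ, k ≤ 0 → e k = 0 := fun k hk => by
    simp only [hedef]; rw [if_pos hk]
  -- index arithmetic
  have hidx : ∀ nn ii : ℕ, 1 ≤ nn → 1 ≤ ii → ii ≤ s →
      (s*(nn-1) + ii - 1) / s + 1 = nn ∧ (s*(nn-1) + ii - 1) % s + 1 = ii := by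
    intro nn ii hn h1 h2
    have hdm : s*(nn-1) + ii - 1 = (ii-1) + (nn-1)*s := by
      rw [Nat.add_sub_assoc h1, Nat.add_comm, Nat.mul_comm]
    constructor
    · rw [hdm, Nat.add_mul_div_right _ _ hs, Nat.div_eq_of_lt (by omega)]
      omega
    · rw [hdm, Nat.add_mul_mod_self_right, Nat.mod_eq_of_lt (by omega)]
      omega
  have hueval : ∀ nn ii : ℕ, 1 ≤ nn → 1 ≤ ii → ii ≤ s →
      u ((s:ℤ)*((nn:ℤ)-1) + (ii:ℤ)) = X nn ii := by
    intro nn ii hn h1 h2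
    have hcast : ((s:ℤ)*((nn:ℤ)-1) + (ii:ℤ)) = ((s*(nn-1) + ii : ℕ) : ℤ) := by
      push_cast [Nat.cast_sub hn]
      ring
    have hpos : (0:ℤ) < ((s*(nn-1) + ii : ℕ) : ℤ) := by
      exact_mod_cast (show 0 < s*(nn-1) + ii by omega)
    rw [hcast]
    simp only [hudef]
    rw [if_neg (not_le.mpr hpos), Int.toNat_natCast,
      (hidx nn ii hn h1 h2).1, (hidx nn ii hn h1 h2).2]
  have heeval : ∀ nn ii : ℕ, 1 ≤ nn → 1 ≤ ii → ii ≤ s →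
      e ((s:ℤ)*((nn:ℤ)-1) + (ii:ℤ)) = Q nn ii := by
    intro nn ii hn h1 h2
    have hcast : ((s:ℤ)*((nn:ℤ)-1) + (ii:ℤ)) = ((s*(nn-1) + ii : ℕ) : ℤ) := by
      push_cast [Nat.cast_sub hn]
      ring
    have hpos : (0:ℤ) < ((s*(nn-1) + ii : ℕ) : ℤ) := by
      exact_mod_cast (show 0 < s*(nn-1) + ii by omega)
    rw [hcast]
    simp only [hedef]
    rw [if_neg (not_le.mpr hpos), Int.toNat_natCast,
      (hidx nn ii hn h1 h2).1, (hidx nn ii hn h1 h2).2]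
  -- the main bridge
  have hmain : ∀ k : ℤ, 1 ≤ k →
      (u (k-1) + e (k - (s:ℤ)) = u k + e k) ∧
      u k = P (BD9.ph s k) (u (k-1) + e (k - (s:ℤ))) := by
    intro k hk
    obtain ⟨q, r, hqr, hrlt⟩ : ∃ q r : ℕ, k.toNat - 1 = s*q + r ∧ r < s :=
      ⟨(k.toNat-1)/s, (k.toNat-1)%s, (Nat.div_add_mod _ s).symm, Nat.mod_lt _ hs⟩
    set sq : ℕ := s * q with hsq
    set n : ℕ := q + 1 with hn
    set i0 : ℕ := r + 1 with hi0
    have hn1 : 1 ≤ n := by omega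
    have hi1 : 1 ≤ i0 := by omega
    have hi2 : i0 ≤ s := by omega
    have hkN : k.toNat = sq + r + 1 := by omega
    have hk_eq : k = (s:ℤ)*((n:ℤ)-1) + (i0:ℤ) := by
      have h1 : k = ((k.toNat : ℕ) : ℤ) := (Int.toNat_of_nonneg (by omega)).symm
      rw [h1, hkN]
      push_cast [hsq, hn, hi0]
      ring
    have hph : BD9.ph s k = i0 := by
      unfold BD9.ph
      have h3 : (k - 1).toNat = sq + r := by omega
      rw [h3, hsq, Nat.add_comm (s*q) r, Nat.add_mul_mod_self_left,
        Nat.mod_eq_of_lt hrlt]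
    have hXnk : u k = X n i0 := by rw [hk_eq]; exact hueval n i0 hn1 hi1 hi2
    have heQk : e k = Q n i0 := by rw [hk_eq]; exact heeval n i0 hn1 hi1 hi2
    have hstepX := hstep (n-1) i0 hi1 hi2
    rw [Nat.sub_add_cancel hn1] at hstepX
    have hukm1 : u (k-1) = X n (i0 - 1) := by
      rcases Nat.lt_or_ge 1 i0 with hi | hi
      · have hkeq2 : k - 1 = (s:ℤ)*((n:ℤ)-1) + ((i0 - 1 : ℕ) : ℤ) := by
          rw [hk_eq]
          push_cast [Nat.cast_sub (by omega : 1 ≤ i0)]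
          ring
        rw [hkeq2]
        exact hueval n (i0-1) hn1 (by omega) (by omega)
      · have hi0eq : i0 = 1 := by omega
        have hXc : X n 0 = X (n-1) s := by
          have h4 := hcycle (n-1)
          rwa [Nat.sub_add_cancel hn1] at h4
        rw [hi0eq]
        show u (k-1) = X n 0
        rw [hXc]
        rcases Nat.lt_or_ge 1 n with hn2 | hn2
        · have hkeq2 : k - 1 = (s:ℤ)*(((n-1 : ℕ):ℤ)-1) + ((s:ℕ):ℤ) := by
            rw [hk_eq, hi0eq]
            push_cast [Nat.cast_sub hn1]
            ring
          rw [hkeq2]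
          exact hueval (n-1) s (by omega) hs le_rfl
        · have hn1' : n = 1 := by omega
          have hk1 : k = 1 := by
            rw [hn1', hi0eq] at hk_eq
            simpa using hk_eq
          rw [show n - 1 = 0 from by omega, hX0]
          exact hu0 (k-1) (by omega)
    have hekm : e (k - (s:ℤ)) = Q (n-1) i0 := by
      rcases Nat.lt_or_ge 1 n with hn2 | hn2
      · have hkeq2 : k - (s:ℤ) = (s:ℤ)*(((n-1 : ℕ):ℤ)-1) + (i0:ℤ) := by
          rw [hk_eq]
          push_cast [Nat.cast_sub hn1]
          ring
        rw [hkeq2]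
        exact heeval (n-1) i0 (by omega) hi1 hi2
      · have hn1' : n = 1 := by omega
        have hkle : k - (s:ℤ) ≤ 0 := by
          rw [hn1'] at hk_eq
          have h5 : ((i0:ℕ):ℤ) ≤ ((s:ℕ):ℤ) := by exact_mod_cast hi2
          simp only [Nat.cast_one] at hk_eq
          omega
        rw [he0 _ hkle, show n - 1 = 0 from by omega]
        exact (hQ0 i0 hi1 hi2).symm
    constructor
    · rw [hukm1, hekm, hXnk, heQk, hstepX.2]
      abel
    · rw [hXnk, hukm1, hekm, hph]
      exact hstepX.1
  have hstepflat : ∀ k : ℤ, 1 ≤ k → u (k-1) + e (k - (s:ℤ)) = u k + e k :=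
    fun k hk => (hmain k hk).1
  have huP : ∀ k : ℤ, 1 ≤ k → u k = P (BD9.ph s k) (u (k-1) + e (k - (s:ℤ))) :=
    fun k hk => (hmain k hk).2
  have hphrange : ∀ k : ℤ, 1 ≤ BD9.ph s k ∧ BD9.ph s k ≤ s := by
    intro k
    unfold BD9.ph
    have := Nat.mod_lt (k-1).toNat hs
    omega
  have huC : ∀ k : ℤ, 1 ≤ k → u k ∈ C (BD9.ph s k) := by
    intro k hk
    rw [huP k hk]
    exact (hP _ (hphrange k).1 (hphrange k).2 _).1
  have hVI : ∀ k : ℤ, 1 ≤ k → ∀ z ∈ C (BD9.ph s k),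
      (inner ℝ (e k) (z - u k) : ℝ) ≤ 0 := by
    intro k hk z hz
    set i' := BD9.ph s k with hi'
    set pt := u (k-1) + e (k - (s:ℤ)) with hpt
    haveI : Nonempty ↑(C i') := ⟨⟨u k, huC k hk⟩⟩
    have hproj := hP i' (hphrange k).1 (hphrange k).2 pt
    have hmin : ‖pt - u k‖ = ⨅ w : C i', ‖pt - w‖ := by
      refine le_antisymm (le_ciInf fun w => ?_) ?_
      · have h6 := hproj.2 w w.2
        rw [dist_eq_norm, dist_eq_norm] at h6
        rw [huP k hk]
        exact h6
      · have hbdd : BddBelow (Set.range (fun w : C i' => ‖pt - ↑w‖)) := by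
          refine ⟨0, ?_⟩
          rintro rr ⟨w, rfl⟩
          exact norm_nonneg _
        exact ciInf_le hbdd ⟨u k, huC k hk⟩
    have hVIc := (norm_eq_iInf_iff_real_inner_le_zero
      (hCc i' (hphrange k).1 (hphrange k).2).2 (huC k hk)).mp hmin
    have hekk : e k = pt - u k := by
      rw [hpt, hstepflat k hk]
      abel
    rw [hekk]
    exact hVIc z hz
  have hT := BD9.dykstra_flat s hs C hCc u e x ystar hu0 he0 hstepflat huC hVI hyC hymin
  have hm : ∀ n : ℕ, 1 ≤ n → X n i = u ((s*(n-1) + i : ℕ) : ℤ) := by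
    intro n hn
    have hcast : ((s*(n-1) + i : ℕ) : ℤ) = (s:ℤ)*((n:ℤ)-1) + (i:ℤ) := by
      push_cast [Nat.cast_sub hn]
      ring
    rw [hcast, hueval n i hn h1i his]
  have hmono : Tendsto (fun n : ℕ => s*(n-1) + i) atTop atTop := by
    refine tendsto_atTop_mono (fun n => ?_) tendsto_id
    show n ≤ s*(n-1) + i
    have h1 := Nat.le_mul_of_pos_left (n-1) hs
    omega
  have hcomp : Tendsto (fun n : ℕ => u ((s*(n-1) + i : ℕ) : ℤ)) atTop (𝓝 ystar) :=
    hT.comp hmono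
  refine hcomp.congr' ?_
  filter_upwards [eventually_ge_atTop 1] with n hn
  exact (hm n hn).symm
end

section
/- For every horizon L ≥ ℓ, the restricted behavior B_L is a linear subspace of ℝ^{qL} of dimension exactly mL + n. -/
noncomputable section

namespace Beh12

variable {m n p : ℕ} (A : Matrix (Fin n) (Fin n) ℝ) (B : Matrix (Fin n) (Fin m) ℝ)

/-- State trajectory from input `u : ℕ → Fin m → ℝ` and initial state `x0`. -/
def traj (u : ℕ → Fin m → ℝ) (x0 : Fin n → ℝ) : ℕ → Fin n → ℝ
  | 0 => x0
  | t + 1 => A.mulVec (traj u x0 t) + B.mulVec (u t)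

lemma traj_add (u u' : ℕ → Fin m → ℝ) (x0 x0' : Fin n → ℝ) (t : ℕ) :
    traj A B (u + u') (x0 + x0') t = traj A B u x0 t + traj A B u' x0' t := by
  induction t with
  | zero => rfl
  | succ t ih =>
      simp only [traj, ih, Pi.add_apply, Matrix.mulVec_add]
      abel

lemma traj_smul (c : ℝ) (u : ℕ → Fin m → ℝ) (x0 : Fin n → ℝ) (t : ℕ) :
    traj A B (c • u) (c • x0) t = c • traj A B u x0 t := by
  induction t with
  | zero => rfl
  | succ t ih =>
      simp only [traj, ih, Pi.smul_apply, Matrix.mulVec_smul, smul_add]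

lemma traj_zero (x0 : Fin n → ℝ) (t : ℕ) :
    traj A B 0 x0 t = (A ^ t).mulVec x0 := by
  induction t with
  | zero => simp [traj]
  | succ t ih =>
      simp [traj, ih, Matrix.mulVec_mulVec, pow_succ']

variable (L : ℕ)

/-- Extend an input over `Fin L` to all of `ℕ` by zero. -/
def ext (u : Fin L × Fin m → ℝ) : ℕ → Fin m → ℝ :=
  fun t i => if h : t < L then u (⟨t, h⟩, i) else 0

lemma ext_add (u u' : Fin L × Fin m → ℝ) : ext L (u + u') = ext L u + ext L u' := by
  funext t i
  simp only [ext, Pi.add_apply]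
  split <;> simp

lemma ext_smul (c : ℝ) (u : Fin L × Fin m → ℝ) : ext L (c • u) = c • ext L u := by
  funext t i
  simp only [ext, Pi.smul_apply, smul_eq_mul]
  split <;> simp

lemma ext_zero : ext (m := m) L 0 = 0 := by
  funext t i
  simp only [ext, Pi.zero_apply]
  split <;> rfl

variable (C : Matrix (Fin p) (Fin n) ℝ) (D : Matrix (Fin p) (Fin m) ℝ)

/-- The trajectory map: (input, initial state) ↦ stacked i/o trajectory. -/
def Phi : ((Fin L × Fin m → ℝ) × (Fin n → ℝ)) →ₗ[ℝ] (Fin L × (Fin m ⊕ Fin p) → ℝ) where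
  toFun v := fun w =>
    match w with
    | (t, Sum.inl i) => v.1 (t, i)
    | (t, Sum.inr j) =>
        (C.mulVec (traj A B (ext L v.1) v.2 t.val) + D.mulVec (fun i => v.1 (t, i))) j
  map_add' v v' := by
    funext w
    obtain ⟨t, i | j⟩ := w
    · rfl
    · show (C.mulVec (traj A B (ext L (v.1 + v'.1)) (v.2 + v'.2) t.val) + _) j = _
      have hD : (fun i => (v + v').1 (t, i)) =
          (fun i => v.1 (t, i)) + (fun i => v'.1 (t, i)) := rfl
      rw [ext_add, traj_add, hD]
      simp [Matrix.mulVec_add]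
      ring
  map_smul' c v := by
    funext w
    obtain ⟨t, i | j⟩ := w
    · rfl
    · show (C.mulVec (traj A B (ext L (c • v.1)) (c • v.2) t.val) + _) j = _
      have hD : (fun i => (c • v).1 (t, i)) = c • (fun i => v.1 (t, i)) := rfl
      rw [ext_smul, traj_smul, hD]
      simp [Matrix.mulVec_smul]
      ring

end Beh12
end



/-!
STATEMENT 12: For every horizon L ≥ ℓ, the restricted behavior B_L is a linear\nsubspace of ℝ^(qL) of dimension exactly mL + n.
-/

open Filter Topology

noncomputable section DIM

/-- The `k`-step observability matrix col(C, CA, …, CA^(k−1)). -/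
def obsvMat (n p k : ℕ) (A : Matrix (Fin n) (Fin n) ℝ) (C : Matrix (Fin p) (Fin n) ℝ) :
    Matrix (Fin k × Fin p) (Fin n) ℝ :=
  fun r j => (C * A ^ (r.1 : ℕ)) r.2 j

/-- The controllability matrix [B, AB, …, A^(n−1)B]. -/
def ctrbMat (n m : ℕ) (A : Matrix (Fin n) (Fin n) ℝ) (B : Matrix (Fin n) (Fin m) ℝ) :
    Matrix (Fin n) (Fin n × Fin m) ℝ :=
  fun i c => (A ^ (c.1 : ℕ) * B) i c.2

/-- The restricted behavior B_L over the horizon L: stacked input/output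
trajectories w, with w(t) = col(u(t), y(t)) ∈ ℝ^(m+p), generated by the
state-space representation (A, B, C, D). A stacked vector in ℝ^(qL), q = m + p,
is identified with a function `Fin L × (Fin m ⊕ Fin p) → ℝ`. -/
def behavior (m n p L : ℕ) (A : Matrix (Fin n) (Fin n) ℝ) (B : Matrix (Fin n) (Fin m) ℝ)
    (C : Matrix (Fin p) (Fin n) ℝ) (D : Matrix (Fin p) (Fin m) ℝ) :
    Set (Fin L × (Fin m ⊕ Fin p) → ℝ) :=
  {w | ∃ x : Fin (L + 1) → Fin n → ℝ, ∀ t : Fin L,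
    x t.succ = A.mulVec (x t.castSucc) + B.mulVec (fun i => w (t, Sum.inl i)) ∧
    (fun j => w (t, Sum.inr j)) =
      C.mulVec (x t.castSucc) + D.mulVec (fun i => w (t, Sum.inl i))}

theorem statement12
    (m n p : ℕ) (hm : 0 < m) (hn : 0 < n) (hp : 0 < p)
    (A : Matrix (Fin n) (Fin n) ℝ) (B : Matrix (Fin n) (Fin m) ℝ)
    (C : Matrix (Fin p) (Fin n) ℝ) (D : Matrix (Fin p) (Fin m) ℝ)
    -- (A,C) observable
    (hobsv : (obsvMat n p n A C).rank = n)
    -- ℓ is the lag: the least positive k with rank col(C, …, CA^(k−1)) = n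
    (ℓ : ℕ) (hlag : IsLeast {k : ℕ | 0 < k ∧ (obsvMat n p k A C).rank = n} ℓ)
    -- horizon L ≥ ℓ
    (L : ℕ) (hL : ℓ ≤ L) :
    -- B_L is a linear subspace of ℝ^(qL) of dimension mL + n
    ∃ S : Submodule ℝ (Fin L × (Fin m ⊕ Fin p) → ℝ),
      (S : Set (Fin L × (Fin m ⊕ Fin p) → ℝ)) = behavior m n p L A B C D ∧
      Module.finrank ℝ S = m * L + n := by
  classical
  set Φ := Beh12.Phi A B L C D with hΦ
  -- kernel of the ℓ-step observability matrix is trivial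
  have h1 : Module.finrank ℝ (LinearMap.range (obsvMat n p ℓ A C).mulVecLin) = n := hlag.1.2
  have h2 := LinearMap.finrank_range_add_finrank_ker (obsvMat n p ℓ A C).mulVecLin
  rw [h1, Module.finrank_fintype_fun_eq_card, Fintype.card_fin] at h2
  have hker : LinearMap.ker (obsvMat n p ℓ A C).mulVecLin = ⊥ :=
    Submodule.finrank_eq_zero.mp (by omega)
  -- Φ is injective
  have hinj : Function.Injective Φ := by
    rw [← LinearMap.ker_eq_bot]
    apply LinearMap.ker_eq_bot'.mpr
    intro v hv
    have hu : v.1 = 0 := by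
      funext ti
      exact congrFun hv (ti.1, Sum.inl ti.2)
    have hext : Beh12.ext L v.1 = 0 := by rw [hu, Beh12.ext_zero]
    have hy : ∀ t : Fin L, ∀ j : Fin p, ((C * A ^ (t : ℕ)).mulVec v.2) j = 0 := by
      intro t j
      have h := congrFun hv (t, Sum.inr j)
      have : (C.mulVec (Beh12.traj A B (Beh12.ext L v.1) v.2 t.val)
          + D.mulVec (fun i => v.1 (t, i))) j = 0 := h
      rw [hext, Beh12.traj_zero, hu] at this
      simpa [Matrix.mulVec_mulVec, show (fun _ : Fin m => (0 : ℝ)) = 0 from rfl] using this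
    have hmem : v.2 ∈ LinearMap.ker (obsvMat n p ℓ A C).mulVecLin := by
      rw [LinearMap.mem_ker]
      funext kj
      obtain ⟨k, j⟩ := kj
      have hkL : (k : ℕ) < L := lt_of_lt_of_le k.isLt hL
      have := hy ⟨k, hkL⟩ j
      exact this
    have h2 : v.2 = 0 := by rwa [hker, Submodule.mem_bot] at hmem
    exact Prod.ext hu h2
  refine ⟨LinearMap.range Φ, ?_, ?_⟩
  · apply Set.eq_of_subset_of_subset
    · -- range ⊆ behavior
      rintro w ⟨v, rfl⟩
      refine ⟨fun t => Beh12.traj A B (Beh12.ext L v.1) v.2 t.val, fun t => ⟨?_, ?_⟩⟩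
      · have he : Beh12.ext L v.1 t.val = fun i => v.1 (t, i) := by
          funext i
          simp [Beh12.ext, t.isLt]
        show Beh12.traj A B (Beh12.ext L v.1) v.2 (t.val + 1) = _
        simp only [Beh12.traj, he]
        rfl
      · funext j
        rfl
    · -- behavior ⊆ range
      rintro w ⟨x, hx⟩
      set u : Fin L × Fin m → ℝ := fun ti => w (ti.1, Sum.inl ti.2) with hu
      have hstate : ∀ k, ∀ hk : k ≤ L,
          x ⟨k, Nat.lt_succ_of_le hk⟩ = Beh12.traj A B (Beh12.ext L u) (x 0) k := by
        intro k
        induction k with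
        | zero => intro _; rfl
        | succ k ih =>
          intro hk
          have hkL : k < L := hk
          have h := (hx ⟨k, hkL⟩).1
          have hsucc : (⟨k + 1, Nat.lt_succ_of_le hk⟩ : Fin (L + 1)) = (⟨k, hkL⟩ : Fin L).succ := rfl
          rw [hsucc, h]
          have hcast : (⟨k, hkL⟩ : Fin L).castSucc = ⟨k, Nat.lt_succ_of_le (le_of_lt hkL)⟩ := rfl
          rw [hcast, ih (le_of_lt hkL)]
          have he : Beh12.ext L u k = fun i => w (⟨k, hkL⟩, Sum.inl i) := by
            funext i
            simp [Beh12.ext, hkL, hu]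
          show _ = Beh12.traj A B (Beh12.ext L u) (x 0) (k + 1)
          simp only [Beh12.traj, he]
      refine ⟨(u, x 0), ?_⟩
      funext z
      obtain ⟨t, i | j⟩ := z
      · rfl
      · have h := congrFun (hx t).2 j
        have hx' : x t.castSucc = Beh12.traj A B (Beh12.ext L u) (x 0) t.val := by
          have := hstate t.val (le_of_lt t.isLt)
          exact this
        show (C.mulVec (Beh12.traj A B (Beh12.ext L u) (x 0) t.val)
            + D.mulVec (fun i => u (t, i))) j = w (t, Sum.inr j)
        rw [← hx']
        exact h.symm
  · rw [LinearMap.finrank_range_of_inj hinj]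
    simp [Module.finrank_prod, Module.finrank_fintype_fun_eq_card, Fintype.card_prod,
      Fintype.card_fin, mul_comm]


end DIM
end
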